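/- arXiv:2311.01758 — 3 statements merged into one kernel-verified Lean document; each statement's English description precedes it below -/
import Mathlib

section
/- Let f_1, …, f_m : ℝⁿ → ℝ ∪ {+∞} (m ≥ 2) be lower semicontinuous functions, each with unbounded domain and with dom(f_1 + … + f_m) unbounded, satisfying the qualification condition: whenever u_1 + … + u_m = 0 with u_i ∈ ∂^∞f_i(∞) for each i, one has u_1 = … = u_m = 0. Then ∂(f_1 + … + f_m)(∞) ⊆ ∂f_1(∞) + … + ∂f_m(∞) and ∂^∞(f_1 + … + f_m)(∞) ⊆ ∂^∞f_1(∞) + … + ∂^∞f_m(∞). -/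
open Filter Topology Set Pointwise RealInnerProductSpace

noncomputable section

variable {E : Type*} [NormedAddCommGroup E] [InnerProductSpace ℝ E]

/-- The Fréchet (regular) normal cone to `Ω` at `x`:
`{v | limsup_{y→x, y∈Ω} ⟪v, y-x⟫/‖y-x‖ ≤ 0}`, empty if `x ∉ Ω`. -/
def FrechetNormalCone (Ω : Set E) (x : E) : Set E :=
  {v | x ∈ Ω ∧ ∀ ε > (0:ℝ), ∀ᶠ y in 𝓝[Ω] x, ⟪v, y - x⟫ ≤ ε * ‖y - x‖}

/-- The limiting (Mordukhovich) normal cone to `Ω` at `x`. -/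
def LimitingNormalCone (Ω : Set E) (x : E) : Set E :=
  {v | ∃ xs vs : ℕ → E, (∀ k, vs k ∈ FrechetNormalCone Ω (xs k)) ∧
    Tendsto xs atTop (𝓝 x) ∧ Tendsto vs atTop (𝓝 v)}

/-- The normal cone to an unbounded set `Ω` at infinity. -/
def NormalConeAtInfty (Ω : Set E) : Set E :=
  {v | ∃ xs vs : ℕ → E, (∀ k, vs k ∈ FrechetNormalCone Ω (xs k)) ∧
    Tendsto (fun k => ‖xs k‖) atTop atTop ∧ Tendsto vs atTop (𝓝 v)}

/-- The epigraph of `f : E → ℝ ∪ {+∞}` as a subset of the (ℓ²-)product `E × ℝ`. -/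
def epiSet (f : E → EReal) : Set (WithLp 2 (E × ℝ)) :=
  {p | f (WithLp.equiv 2 (E × ℝ) p).1 ≤ ((WithLp.equiv 2 (E × ℝ) p).2 : EReal)}

/-- The point `(x, t)` of the (ℓ²-)product `E × ℝ`. -/
def mkP (x : E) (t : ℝ) : WithLp 2 (E × ℝ) := (WithLp.equiv 2 (E × ℝ)).symm (x, t)

/-- `𝒩(f)`: limits of limiting normals to `epi f` at points `(x_k, f(x_k))` with `‖x_k‖ → ∞`. -/
def NclAtInfty (f : E → EReal) : Set (E × ℝ) :=
  {q | ∃ (xs : ℕ → E) (ws : ℕ → WithLp 2 (E × ℝ)),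
    (∀ k, f (xs k) ≠ ⊤) ∧
    Tendsto (fun k => ‖xs k‖) atTop atTop ∧
    (∀ k, ws k ∈ LimitingNormalCone (epiSet f) (mkP (xs k) (f (xs k)).toReal)) ∧
    Tendsto (fun k => WithLp.equiv 2 (E × ℝ) (ws k)) atTop (𝓝 q)}

/-- The limiting subdifferential of `f` at infinity: `∂f(∞) = {u | (u,-1) ∈ 𝒩(f)}`. -/
def subInfty (f : E → EReal) : Set E := {u | (u, (-1 : ℝ)) ∈ NclAtInfty f}

/-- The singular subdifferential of `f` at infinity: `∂^∞f(∞) = {u | (u,0) ∈ 𝒩(f)}`. -/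
def singSubInfty (f : E → EReal) : Set E := {u | (u, (0 : ℝ)) ∈ NclAtInfty f}

/-- The singular subdifferential of `f` at a point `x ∈ dom f`:
`∂^∞f(x) = {v | (v,0) ∈ N((x,f(x)); epi f)}`, empty if `x ∉ dom f`. -/
def singSub (f : E → EReal) (x : E) : Set E :=
  {v | f x ≠ ⊤ ∧ mkP v 0 ∈ LimitingNormalCone (epiSet f) (mkP x (f x).toReal)}

/-- `λ∘∂f(∞)`: equals `λ • ∂f(∞)` for `λ ≠ 0` and `∂^∞f(∞)` for `λ = 0`. -/
def lamCirc (f : E → EReal) (lam : ℝ) : Set E :=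
  if lam = 0 then singSubInfty f else lam • subInfty f

/-- `f` is Lipschitz at infinity. -/
def LipschitzAtInfty (f : E → ℝ) : Prop :=
  ∃ L > (0:ℝ), ∃ R > (0:ℝ), ∀ x x' : E, R < ‖x‖ → R < ‖x'‖ → |f x - f x'| ≤ L * ‖x - x'‖

end


set_option linter.unusedSectionVars false
set_option synthInstance.maxHeartbeats 1000000
set_option maxHeartbeats 1000000

noncomputable section
namespace SumRuleAux

variable {H : Type*} [NormedAddCommGroup H] [InnerProductSpace ℝ H]


variable {H : Type*} [NormedAddCommGroup H] [InnerProductSpace ℝ H]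

theorem frechet_iff {Ω : Set H} {x v : H} :
    v ∈ FrechetNormalCone Ω x ↔ x ∈ Ω ∧
      ∀ ε > (0:ℝ), ∃ η > (0:ℝ), ∀ y ∈ Ω, ‖y - x‖ < η → ⟪v, y - x⟫ ≤ ε * ‖y - x‖ := by
  constructor
  · rintro ⟨hx, h⟩
    refine ⟨hx, fun ε hε => ?_⟩
    have := h ε hε
    rw [eventually_nhdsWithin_iff, Metric.eventually_nhds_iff] at this
    obtain ⟨η, hη, hball⟩ := this
    exact ⟨η, hη, fun y hy hna => hball (by simpa [dist_eq_norm] using hna) hy⟩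
  · rintro ⟨hx, h⟩
    refine ⟨hx, fun ε hε => ?_⟩
    obtain ⟨η, hη, hball⟩ := h ε hε
    rw [eventually_nhdsWithin_iff, Metric.eventually_nhds_iff]
    exact ⟨η, hη, fun y hy hyΩ => hball y hyΩ (by simpa [dist_eq_norm] using hy)⟩

theorem frechet_smul {Ω : Set H} {x v : H} {c : ℝ} (hc : 0 < c)
    (hv : v ∈ FrechetNormalCone Ω x) : c • v ∈ FrechetNormalCone Ω x := by
  rw [frechet_iff] at hv ⊢
  refine ⟨hv.1, fun ε hε => ?_⟩
  obtain ⟨η, hη, hb⟩ := hv.2 (ε / c) (by positivity)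
  refine ⟨η, hη, fun y hy hn => ?_⟩
  have := hb y hy hn
  rw [real_inner_smul_left]
  calc c * ⟪v, y - x⟫ ≤ c * (ε / c * ‖y - x‖) := by
        exact mul_le_mul_of_nonneg_left this hc.le
    _ = ε * ‖y - x‖ := by field_simp
    
theorem frechet_mem_limiting {Ω : Set H} {x v : H} (hv : v ∈ FrechetNormalCone Ω x) :
    v ∈ LimitingNormalCone Ω x :=
  ⟨fun _ => x, fun _ => v, fun _ => hv, tendsto_const_nhds, tendsto_const_nhds⟩

/-- First-order condition: quadratic growth bound implies Fréchet normal. -/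
theorem frechet_of_quad {S : Set H} {z0 W : H} (hz0 : z0 ∈ S) {C η : ℝ} (hη : 0 < η)
    (h : ∀ x ∈ S, ‖x - z0‖ < η → ⟪W, x - z0⟫ ≤ C * ‖x - z0‖ ^ 2) :
    W ∈ FrechetNormalCone S z0 := by
  rw [frechet_iff]
  refine ⟨hz0, fun ε hε => ?_⟩
  set C' := max C 1 with hC'
  have hC0 : 0 < C' := lt_max_of_lt_right one_pos
  refine ⟨min η (ε / C'), lt_min hη (by positivity), fun y hy hn => ?_⟩
  have h1 : ‖y - z0‖ < η := lt_of_lt_of_le hn (min_le_left _ _)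
  have h2 : ‖y - z0‖ ≤ ε / C' := le_of_lt (lt_of_lt_of_le hn (min_le_right _ _))
  calc ⟪W, y - z0⟫ ≤ C * ‖y - z0‖ ^ 2 := h y hy h1
    _ ≤ C' * ‖y - z0‖ ^ 2 := by
        have := sq_nonneg ‖y - z0‖
        nlinarith [le_max_left C 1]
    _ = (C' * ‖y - z0‖) * ‖y - z0‖ := by ring
    _ ≤ ε * ‖y - z0‖ := by
        have hy0 : (0:ℝ) ≤ ‖y - z0‖ := norm_nonneg _
        have : C' * ‖y - z0‖ ≤ ε := by
          calc C' * ‖y - z0‖ ≤ C' * (ε / C') := by nlinarith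
            _ = ε := by field_simp
        nlinarith



@[simp] theorem mkP_fst (x : H) (t : ℝ) : (mkP x t).fst = x := rfl
@[simp] theorem mkP_snd (x : H) (t : ℝ) : (mkP x t).snd = t := rfl
theorem mkP_eta (p : WithLp 2 (H × ℝ)) : mkP p.fst p.snd = p := rfl
theorem mkP_sub (x y : H) (t s : ℝ) : mkP x t - mkP y s = mkP (x - y) (t - s) := rfl

theorem inner_mkP (W : WithLp 2 (H × ℝ)) (a : H) (s : ℝ) :
    ⟪W, mkP a s⟫ = ⟪W.fst, a⟫ + W.snd * s := by
  rw [WithLp.prod_inner_apply]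
  simp [RCLike.inner_apply, conj_trivial, mkP]
  ring

theorem norm_sq_mkP (x : H) (t : ℝ) : ‖mkP x t‖ ^ 2 = ‖x‖ ^ 2 + t ^ 2 := by
  rw [WithLp.prod_norm_sq_eq_of_L2]
  simp [Real.norm_eq_abs, sq_abs]

theorem norm_mkP_left (x : H) : ‖mkP x (0:ℝ)‖ = ‖x‖ := by
  have h := norm_sq_mkP x 0
  simp only [ne_eq, OfNat.ofNat_ne_zero, not_false_eq_true, zero_pow, add_zero] at h
  calc ‖mkP x (0:ℝ)‖ = Real.sqrt (‖mkP x (0:ℝ)‖ ^ 2) := (Real.sqrt_sq (norm_nonneg _)).symm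
    _ = ‖x‖ := by rw [h]; exact Real.sqrt_sq (norm_nonneg _)

theorem norm_mkP_right (s : ℝ) : ‖mkP (0:H) s‖ = |s| := by
  have h := norm_sq_mkP (0:H) s
  simp only [norm_zero, ne_eq, OfNat.ofNat_ne_zero, not_false_eq_true, zero_pow, zero_add] at h
  calc ‖mkP (0:H) s‖ = Real.sqrt (‖mkP (0:H) s‖ ^ 2) := (Real.sqrt_sq (norm_nonneg _)).symm
    _ = |s| := by rw [h]; exact Real.sqrt_sq_eq_abs s

theorem fst_norm_le (p : WithLp 2 (H × ℝ)) : ‖p.fst‖ ≤ ‖p‖ := by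
  have h := WithLp.prod_norm_sq_eq_of_L2 p
  nlinarith [norm_nonneg p, norm_nonneg p.fst, norm_nonneg p.snd, sq_nonneg ‖p.snd‖]

theorem snd_abs_le (p : WithLp 2 (H × ℝ)) : |p.snd| ≤ ‖p‖ := by
  have h := WithLp.prod_norm_sq_eq_of_L2 p
  have h2 : ‖p.snd‖ = |p.snd| := Real.norm_eq_abs _
  nlinarith [norm_nonneg p, norm_nonneg p.fst, norm_nonneg p.snd, sq_nonneg ‖p.fst‖,
    abs_nonneg p.snd]

theorem mem_epiSet {f : H → EReal} {p : WithLp 2 (H × ℝ)} :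
    p ∈ epiSet f ↔ f p.fst ≤ (p.snd : EReal) := Iff.rfl

theorem mem_epiSet_mkP {f : H → EReal} {x : H} {t : ℝ} :
    mkP x t ∈ epiSet f ↔ f x ≤ (t : EReal) := Iff.rfl

theorem epi_isClosed {f : H → EReal} (hf : LowerSemicontinuous f) : IsClosed (epiSet f) := by
  rw [← isSeqClosed_iff_isClosed]
  intro x q hx hq
  by_contra hc
  rw [mem_epiSet, not_le] at hc
  obtain ⟨y, h1, h2⟩ := exists_between hc
  have hfst : Tendsto (fun n => (x n).fst) atTop (𝓝 q.fst) :=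
    ((continuous_fst.comp (WithLp.prod_continuous_ofLp 2 H ℝ)).tendsto q).comp hq
  have hsnd : Tendsto (fun n => (x n).snd) atTop (𝓝 q.snd) :=
    ((continuous_snd.comp (WithLp.prod_continuous_ofLp 2 H ℝ)).tendsto q).comp hq
  have hev1 : ∀ᶠ n in atTop, y < f (x n).fst := hfst.eventually (hf q.fst y h2)
  have hsnd' : Tendsto (fun n => ((x n).snd : EReal)) atTop (𝓝 (q.snd : EReal)) :=
    (continuous_coe_real_ereal.tendsto _).comp hsnd
  have hev2 : ∀ᶠ n in atTop, ((x n).snd : EReal) < y := hsnd'.eventually_lt_const h1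
  obtain ⟨n, hn1, hn2⟩ := (hev1.and hev2).exists
  exact absurd ((hx n).trans hn2.le) (not_le.mpr hn1)


theorem epi_snd_nonpos {f : H → EReal} {x : H} {t : ℝ} {W : WithLp 2 (H × ℝ)}
    (hW : W ∈ FrechetNormalCone (epiSet f) (mkP x t)) : W.snd ≤ 0 := by
  rw [frechet_iff] at hW
  obtain ⟨hmem, h⟩ := hW
  by_contra hc
  push_neg at hc
  obtain ⟨η, hη, hb⟩ := h (W.snd / 2) (by linarith)
  set s := min (η / 2) 1 with hs
  have hs0 : 0 < s := lt_min (by linarith) one_pos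
  rw [mem_epiSet_mkP] at hmem
  have hy : mkP x (t + s) ∈ epiSet f := by
    rw [mem_epiSet_mkP]
    refine le_trans hmem ?_
    exact_mod_cast EReal.coe_le_coe_iff.mpr (by linarith : t ≤ t + s)
  have hdiff : mkP x (t + s) - mkP x t = mkP (0:H) s := by
    rw [mkP_sub]; congr 1 <;> simp
  have hnorm : ‖mkP x (t + s) - mkP x t‖ = s := by
    rw [hdiff, norm_mkP_right, abs_of_pos hs0]
  have hlt : ‖mkP x (t + s) - mkP x t‖ < η := by
    rw [hnorm]; calc s ≤ η / 2 := min_le_left _ _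
      _ < η := by linarith
  have := hb _ hy hlt
  rw [hdiff, inner_mkP, norm_mkP_right, abs_of_pos hs0] at this
  simp only [inner_zero_right, zero_add] at this
  nlinarith

theorem graph_of_neg {f : H → EReal} {x : H} {t : ℝ} {W : WithLp 2 (H × ℝ)}
    (hW : W ∈ FrechetNormalCone (epiSet f) (mkP x t)) (hneg : W.snd < 0) (hbot : f x ≠ ⊥) :
    f x = (t : EReal) := by
  rw [frechet_iff] at hW
  obtain ⟨hmem, h⟩ := hW
  rw [mem_epiSet_mkP] at hmem
  by_contra hne
  have hlt : f x < (t : EReal) := lt_of_le_of_ne hmem hne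
  have hxt : f x ≠ ⊤ := ne_top_of_lt hlt
  set r := (f x).toReal with hrdef
  have hr : f x = (r : EReal) := (EReal.coe_toReal hxt hbot).symm
  have hrt : r < t := by
    rw [hr] at hlt; exact_mod_cast hlt
  obtain ⟨η, hη, hb⟩ := h (-W.snd / 2) (by linarith)
  set s := min (η / 2) (t - r) with hs
  have hs0 : 0 < s := lt_min (by linarith) (by linarith)
  have hy : mkP x (t - s) ∈ epiSet f := by
    rw [mem_epiSet_mkP, hr]
    have : r ≤ t - s := by
      have := min_le_right (η / 2) (t - r); simp only [← hs] at this; linarith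
    exact_mod_cast EReal.coe_le_coe_iff.mpr this
  have hdiff : mkP x (t - s) - mkP x t = mkP (0:H) (-s) := by
    rw [mkP_sub]; congr 1 <;> simp
  have hnorm : ‖mkP x (t - s) - mkP x t‖ = s := by
    rw [hdiff, norm_mkP_right, abs_of_neg (by linarith : -s < 0)]; ring
  have hlt' : ‖mkP x (t - s) - mkP x t‖ < η := by
    rw [hnorm]; calc s ≤ η / 2 := min_le_left _ _
      _ < η := by linarith
  have := hb _ hy hlt'
  rw [hdiff, inner_mkP, norm_mkP_right, abs_of_neg (by linarith : -s < 0)] at this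
  simp only [inner_zero_right, zero_add] at this
  nlinarith

/-- Normalize a Fréchet normal at an epigraph point down to the graph point. -/
theorem normalizeToGraph {f : H → EReal} {x : H} {t : ℝ} {W : WithLp 2 (H × ℝ)}
    (hW : W ∈ FrechetNormalCone (epiSet f) (mkP x t)) (hbot : f x ≠ ⊥) :
    f x ≠ ⊤ ∧ W ∈ FrechetNormalCone (epiSet f) (mkP x (f x).toReal) := by
  have hmem : f x ≤ (t : EReal) := (frechet_iff.mp hW).1
  have hxt : f x ≠ ⊤ := fun h => by simp [h] at hmem
  refine ⟨hxt, ?_⟩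
  rcases lt_trichotomy W.snd 0 with hneg | hzero | hpos
  · have hfx : f x = (t : EReal) := graph_of_neg hW hneg hbot
    have : (f x).toReal = t := by rw [hfx]; exact EReal.toReal_coe t
    rwa [this]
  · -- horizontal normal: transfer down
    set r := (f x).toReal with hrdef
    have hr : f x = (r : EReal) := (EReal.coe_toReal hxt hbot).symm
    have hrt : r ≤ t := by
      rw [hr] at hmem; exact_mod_cast hmem
    rcases eq_or_lt_of_le hrt with heq | hlt
    · rw [heq]; exact hW
    rw [frechet_iff] at hW ⊢
    refine ⟨by rw [mem_epiSet_mkP, hr], fun ε hε => ?_⟩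
    obtain ⟨η, hη, hb⟩ := hW.2 ε hε
    refine ⟨min η (t - r), lt_min hη (by linarith), fun y hy hn => ?_⟩
    have hyfst : (y - mkP x r).fst = y.fst - x := rfl
    have hysnd : (y - mkP x r).snd = y.snd - r := rfl
    have h1 : ‖y.fst - x‖ ≤ ‖y - mkP x r‖ := by
      rw [← hyfst]; exact fst_norm_le _
    have h2 : |y.snd - r| ≤ ‖y - mkP x r‖ := by
      rw [← hysnd]; exact snd_abs_le _
    have hylt : y.snd < t := by
      have := abs_lt.mp (lt_of_le_of_lt h2 (lt_of_lt_of_le hn (min_le_right _ _)))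
      linarith [this.2]
    have hy' : mkP y.fst t ∈ epiSet f := by
      rw [mem_epiSet_mkP]
      refine le_trans (mem_epiSet.mp hy) ?_
      exact_mod_cast EReal.coe_le_coe_iff.mpr hylt.le
    have hdiff : mkP y.fst t - mkP x t = mkP (y.fst - x) 0 := by
      rw [mkP_sub]; congr 1; ring
    have hlt2 : ‖mkP y.fst t - mkP x t‖ < η := by
      rw [hdiff, norm_mkP_left]
      exact lt_of_le_of_lt h1 (lt_of_lt_of_le hn (min_le_left _ _))
    have hkey := hb _ hy' hlt2
    rw [hdiff, norm_mkP_left, inner_mkP] at hkey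
    have hinner : ⟪W, y - mkP x r⟫ = ⟪W.fst, y.fst - x⟫ + W.snd * (y.snd - r) := by
      rw [show y - mkP x r = mkP (y.fst - x) (y.snd - r) from rfl, inner_mkP]
    rw [hinner, hzero]
    simp only [zero_mul, add_zero]
    calc ⟪W.fst, y.fst - x⟫ ≤ ε * ‖y.fst - x‖ := by simpa using hkey
      _ ≤ ε * ‖y - mkP x r‖ := mul_le_mul_of_nonneg_left h1 hε.le
  · exact absurd (epi_snd_nonpos hW) (not_le.mpr hpos)

/-! ### The auxiliary space `Z = H ×₂ ℝᵐ` -/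

variable {m : ℕ}

theorem eq_zero_of_abs_le_all {a : ℝ} (h : ∀ ε > (0:ℝ), |a| ≤ ε) : a = 0 := by
  by_contra hc
  have h1 : 0 < |a| := abs_pos.mpr hc
  have := h (|a| / 2) (by linarith)
  linarith

def mkZ (x : H) (v : EuclideanSpace ℝ (Fin m)) : WithLp 2 (H × EuclideanSpace ℝ (Fin m)) :=
  (WithLp.equiv 2 _).symm (x, v)

@[simp] theorem mkZ_fst (x : H) (v : EuclideanSpace ℝ (Fin m)) : (mkZ x v).fst = x := rfl
@[simp] theorem mkZ_snd (x : H) (v : EuclideanSpace ℝ (Fin m)) : (mkZ x v).snd = v := rfl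

theorem inner_Z (z w : WithLp 2 (H × EuclideanSpace ℝ (Fin m))) :
    ⟪z, w⟫ = ⟪z.fst, w.fst⟫ + ∑ i, z.snd i * w.snd i := by
  rw [WithLp.prod_inner_apply, PiLp.inner_apply]
  simp [RCLike.inner_apply, conj_trivial]
  exact Finset.sum_congr rfl fun i _ => mul_comm _ _

theorem norm_sq_Z (z : WithLp 2 (H × EuclideanSpace ℝ (Fin m))) :
    ‖z‖ ^ 2 = ‖z.fst‖ ^ 2 + ∑ i, (z.snd i) ^ 2 := by
  rw [WithLp.prod_norm_sq_eq_of_L2]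
  congr 1
  rw [EuclideanSpace.norm_eq]
  rw [Real.sq_sqrt (by positivity)]
  congr 1; ext i; rw [Real.norm_eq_abs, sq_abs]

theorem Zfst_norm_le (z : WithLp 2 (H × EuclideanSpace ℝ (Fin m))) : ‖z.fst‖ ≤ ‖z‖ := by
  have h := norm_sq_Z z
  have h2 : (0:ℝ) ≤ ∑ i, (z.snd i) ^ 2 := by positivity
  nlinarith [norm_nonneg z, norm_nonneg z.fst]

theorem Zsnd_abs_le (z : WithLp 2 (H × EuclideanSpace ℝ (Fin m))) (i : Fin m) :
    |z.snd i| ≤ ‖z‖ := by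
  have h := norm_sq_Z z
  have h2 : (z.snd i) ^ 2 ≤ ∑ j, (z.snd j) ^ 2 :=
    Finset.single_le_sum (f := fun j => (z.snd j) ^ 2) (fun j _ => sq_nonneg _) (Finset.mem_univ i)
  nlinarith [norm_nonneg z, abs_nonneg (z.snd i), sq_abs (z.snd i)]

def psiMap (i : Fin m) (z : WithLp 2 (H × EuclideanSpace ℝ (Fin m))) : WithLp 2 (H × ℝ) :=
  mkP z.fst (z.snd i)

def phiMap (z : WithLp 2 (H × EuclideanSpace ℝ (Fin m))) : WithLp 2 (H × ℝ) :=
  mkP z.fst (∑ i, z.snd i)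

theorem ereal_coe_sum {ι : Type*} (s : Finset ι) (t : ι → ℝ) :
    ((∑ i ∈ s, t i : ℝ) : EReal) = ∑ i ∈ s, (t i : EReal) := by
  classical
  induction s using Finset.induction_on with
  | empty => simp
  | insert _ _ h ih => rw [Finset.sum_insert h, Finset.sum_insert h, ← ih]; exact EReal.coe_add _ _

/-- Extraction of epigraph normals from normals to a cylinder. -/
theorem cyl_normal_extract {g : H → EReal} {i : Fin m} {z W : WithLp 2 (H × EuclideanSpace ℝ (Fin m))}
    (hW : W ∈ FrechetNormalCone (psiMap i ⁻¹' epiSet g) z) :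
    (∀ j, j ≠ i → W.snd j = 0) ∧
      mkP W.fst (W.snd i) ∈ FrechetNormalCone (epiSet g) (psiMap i z) := by
  rw [frechet_iff] at hW
  obtain ⟨hz, h⟩ := hW
  constructor
  · intro j hj
    apply eq_zero_of_abs_le_all
    intro ε hε
    obtain ⟨η, hη, hb⟩ := h ε hε
    have key : ∀ t : ℝ, t ≠ 0 → |t| < η → t * W.snd j ≤ ε * |t| := by
      intro t ht htη
      set z' := z + mkZ 0 (t • EuclideanSpace.single j (1:ℝ)) with hz'
      have hdiff : z' - z = mkZ 0 (t • EuclideanSpace.single j (1:ℝ)) := by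
        rw [hz']; abel
      have hn2 : ‖mkZ (0:H) (t • EuclideanSpace.single j (1:ℝ))‖ = |t| := by
        have h1 : ‖mkZ (0:H) (t • EuclideanSpace.single j (1:ℝ))‖ ^ 2
            = ‖t • EuclideanSpace.single j (1:ℝ)‖ ^ 2 := by
          rw [norm_sq_Z]
          simp only [mkZ_fst, mkZ_snd, norm_zero, ne_eq, OfNat.ofNat_ne_zero,
            not_false_eq_true, zero_pow, zero_add]
          rw [EuclideanSpace.norm_eq, Real.sq_sqrt (by positivity)]
          congr 1; ext l; rw [Real.norm_eq_abs, sq_abs]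
        have h2 : ‖t • EuclideanSpace.single j (1:ℝ)‖ = |t| := by
          rw [norm_smul, EuclideanSpace.norm_single, Real.norm_eq_abs]
          simp
        calc ‖mkZ (0:H) (t • EuclideanSpace.single j (1:ℝ))‖
            = Real.sqrt (‖mkZ (0:H) (t • EuclideanSpace.single j (1:ℝ))‖ ^ 2) :=
              (Real.sqrt_sq (norm_nonneg _)).symm
          _ = |t| := by rw [h1, h2]; exact Real.sqrt_sq (abs_nonneg t)
      have hnorm : ‖z' - z‖ = |t| := by rw [hdiff, hn2]
      have hmem : z' ∈ psiMap i ⁻¹' epiSet g := by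
        have heq : psiMap i z' = psiMap i z := by
          unfold psiMap
          congr 1
          · show z.fst + 0 = z.fst; simp
          · show z.snd i + (t • EuclideanSpace.single j (1:ℝ)) i = z.snd i
            have h3 : (t • EuclideanSpace.single j (1:ℝ)) i
                = t * (EuclideanSpace.single j (1:ℝ)) i := rfl
            rw [h3, EuclideanSpace.single_apply, if_neg (fun hc => hj hc.symm), mul_zero, add_zero]
        show psiMap i z' ∈ epiSet g
        rw [heq]; exact hz
      have hkey := hb z' hmem (by rw [hnorm]; exact htη)
      rw [hdiff, hn2, inner_Z] at hkey
      simp only [mkZ_fst, mkZ_snd, inner_zero_right, zero_add] at hkey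
      have hsum : ∑ l, W.snd l * (t • EuclideanSpace.single j (1:ℝ)) l = t * W.snd j := by
        have heval : ∀ l, W.snd l * (t • EuclideanSpace.single j (1:ℝ)) l
            = if l = j then t * W.snd j else 0 := by
          intro l
          have h4 : (t • EuclideanSpace.single j (1:ℝ)) l
              = t * (EuclideanSpace.single j (1:ℝ)) l := rfl
          rw [h4, EuclideanSpace.single_apply]
          by_cases hl : l = j
          · subst hl; simp [mul_comm]
          · simp [hl]
        rw [Finset.sum_congr rfl (fun l _ => heval l), Finset.sum_ite_eq' Finset.univ j]
        simp
      rw [hsum] at hkey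
      exact hkey
    have k1 := key (η / 2) (by linarith) (by rw [abs_of_pos (by linarith)]; linarith)
    have k2 := key (-(η / 2)) (by linarith) (by rw [abs_neg, abs_of_pos (by linarith)]; linarith)
    rw [abs_of_pos (by linarith : (0:ℝ) < η/2)] at k1
    rw [abs_neg, abs_of_pos (by linarith : (0:ℝ) < η/2)] at k2
    rw [abs_le]
    constructor <;> nlinarith
  · rw [frechet_iff]
    refine ⟨hz, fun ε hε => ?_⟩
    obtain ⟨η, hη, hb⟩ := h ε hε
    refine ⟨η, hη, fun p' hp' hpn => ?_⟩
    classical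
    set z' := mkZ p'.fst (WithLp.toLp 2 (Function.update z.snd i p'.snd)) with hz'def
    have hψ : psiMap i z' = p' := by
      unfold psiMap
      rw [hz'def]
      simp only [mkZ_fst, mkZ_snd, PiLp.toLp_apply]
      rw [Function.update_self]
      exact mkP_eta p'
    have hmem : z' ∈ psiMap i ⁻¹' epiSet g := by
      show psiMap i z' ∈ epiSet g; rw [hψ]; exact hp'
    have hsub : ∀ l, (z'.snd - z.snd) l = if l = i then p'.snd - z.snd i else 0 := by
      intro l
      rw [PiLp.sub_apply]
      by_cases hl : l = i
      · subst hl; rw [hz'def]; simp [Function.update_self]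
      · rw [hz'def]; simp [Function.update_of_ne hl, hl]
    have hsumsq : ∑ l, ((z' - z).snd l) ^ 2 = (p'.snd - z.snd i) ^ 2 := by
      have h1 : ∀ l, ((z' - z).snd l) ^ 2 = if l = i then (p'.snd - z.snd i) ^ 2 else 0 := by
        intro l
        have h0 : (z' - z).snd l = (z'.snd - z.snd) l := rfl
        rw [h0, hsub l]
        by_cases hl : l = i
        · subst hl; simp
        · simp [hl]
      rw [Finset.sum_congr rfl (fun l _ => h1 l), Finset.sum_ite_eq' Finset.univ i]
      simp
    have hsuminner : ∑ l, W.snd l * ((z' - z).snd l) = W.snd i * (p'.snd - z.snd i) := by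
      have h1 : ∀ l, W.snd l * ((z' - z).snd l)
          = if l = i then W.snd i * (p'.snd - z.snd i) else 0 := by
        intro l
        have h0 : (z' - z).snd l = (z'.snd - z.snd) l := rfl
        rw [h0, hsub l]
        by_cases hl : l = i
        · subst hl; simp
        · simp [hl]
      rw [Finset.sum_congr rfl (fun l _ => h1 l), Finset.sum_ite_eq' Finset.univ i]
      simp
    have hnormeq : ‖z' - z‖ = ‖p' - psiMap i z‖ := by
      have e1 : ‖z' - z‖ ^ 2 = ‖p'.fst - z.fst‖ ^ 2 + (p'.snd - z.snd i) ^ 2 := by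
        rw [norm_sq_Z, hsumsq]
        rfl
      have e2 : ‖p' - psiMap i z‖ ^ 2 = ‖p'.fst - z.fst‖ ^ 2 + (p'.snd - z.snd i) ^ 2 := by
        rw [show p' - psiMap i z = mkP (p'.fst - z.fst) (p'.snd - z.snd i) from rfl, norm_sq_mkP]
      calc ‖z' - z‖ = Real.sqrt (‖z' - z‖ ^ 2) := (Real.sqrt_sq (norm_nonneg _)).symm
        _ = Real.sqrt (‖p' - psiMap i z‖ ^ 2) := by rw [e1, e2]
        _ = ‖p' - psiMap i z‖ := Real.sqrt_sq (norm_nonneg _)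
    have hinner : ⟪W, z' - z⟫ = ⟪mkP W.fst (W.snd i), p' - psiMap i z⟫ := by
      rw [inner_Z, hsuminner,
        show p' - psiMap i z = mkP (p'.fst - z.fst) (p'.snd - z.snd i) from rfl, inner_mkP,
        mkP_fst, mkP_snd]
      rfl
    have := hb z' hmem (by rw [hnormeq]; exact hpn)
    rw [hinner, hnormeq] at this
    exact this

/-- Pullback of an epigraph normal of the sum to the intersection of cylinders. -/
theorem pullback_normal {f : Fin m → H → EReal} {z : WithLp 2 (H × EuclideanSpace ℝ (Fin m))}
    {v : H} {σ : ℝ} (hm : 1 ≤ m)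
    (hz : ∀ i, z ∈ psiMap i ⁻¹' epiSet (f i))
    (hV : mkP v σ ∈ FrechetNormalCone (epiSet (fun x => ∑ i, f i x)) (phiMap z)) :
    mkZ v (WithLp.toLp 2 (fun _ => σ)) ∈ FrechetNormalCone (⋂ i, psiMap i ⁻¹' epiSet (f i)) z := by
  have hm0 : (0:ℝ) < m := by exact_mod_cast Nat.lt_of_lt_of_le Nat.zero_lt_one hm
  have hmaps : ∀ z' : WithLp 2 (H × EuclideanSpace ℝ (Fin m)),
      (∀ i, z' ∈ psiMap i ⁻¹' epiSet (f i)) → phiMap z' ∈ epiSet (fun x => ∑ i, f i x) := by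
    intro z' hz'
    rw [show phiMap z' = mkP z'.fst (∑ i, z'.snd i) from rfl, mem_epiSet_mkP]
    calc (∑ i, f i z'.fst) ≤ ∑ i, ((z'.snd i : ℝ) : EReal) :=
          Finset.sum_le_sum (fun i _ => hz' i)
      _ = ((∑ i, z'.snd i : ℝ) : EReal) := (ereal_coe_sum _ _).symm
  have hlip : ∀ z' : WithLp 2 (H × EuclideanSpace ℝ (Fin m)),
      ‖phiMap z' - phiMap z‖ ≤ m * ‖z' - z‖ := by
    intro z'
    have hd : phiMap z' - phiMap z = mkP (z'.fst - z.fst) (∑ i, (z'.snd - z.snd) i) := by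
      rw [show phiMap z' = mkP z'.fst (∑ i, z'.snd i) from rfl,
        show phiMap z = mkP z.fst (∑ i, z.snd i) from rfl, mkP_sub, ← Finset.sum_sub_distrib]
      rfl
    have hsq : ‖phiMap z' - phiMap z‖ ^ 2 ≤ (m * ‖z' - z‖) ^ 2 := by
      rw [hd, norm_sq_mkP]
      have h1 : (∑ i, (z'.snd - z.snd) i) ^ 2 ≤ (m:ℝ) * ∑ i, ((z'.snd - z.snd) i) ^ 2 := by
        have := sq_sum_le_card_mul_sum_sq (s := Finset.univ) (f := fun i => (z'.snd - z.snd) i)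
        simpa using this
      have h2 : ‖z' - z‖ ^ 2 = ‖z'.fst - z.fst‖ ^ 2 + ∑ i, ((z'.snd - z.snd) i) ^ 2 := by
        rw [norm_sq_Z]; rfl
      have hm1 : (1:ℝ) ≤ m := by exact_mod_cast hm
      have hx2 : (0:ℝ) ≤ ‖z'.fst - z.fst‖ ^ 2 := sq_nonneg _
      have hs2 : (0:ℝ) ≤ ∑ i, ((z'.snd - z.snd) i) ^ 2 := by positivity
      calc ‖z'.fst - z.fst‖ ^ 2 + (∑ i, (z'.snd - z.snd) i) ^ 2
          ≤ ‖z'.fst - z.fst‖ ^ 2 + (m:ℝ) * ∑ i, ((z'.snd - z.snd) i) ^ 2 := by linarith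
        _ ≤ (m:ℝ)^2 * (‖z'.fst - z.fst‖ ^ 2 + ∑ i, ((z'.snd - z.snd) i) ^ 2) := by
            have e3 : (1:ℝ) ≤ (m:ℝ)^2 := by nlinarith
            have e4 : (m:ℝ) ≤ (m:ℝ)^2 := by nlinarith
            have e5 := mul_le_mul_of_nonneg_right e3 hx2
            have e6 := mul_le_mul_of_nonneg_right e4 hs2
            nlinarith
        _ = ((m:ℝ) * ‖z' - z‖) ^ 2 := by rw [mul_pow, h2]
    have h3 : (0:ℝ) ≤ m * ‖z' - z‖ := by positivity
    calc ‖phiMap z' - phiMap z‖ = Real.sqrt (‖phiMap z' - phiMap z‖ ^ 2) :=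
          (Real.sqrt_sq (norm_nonneg _)).symm
      _ ≤ Real.sqrt ((m * ‖z' - z‖) ^ 2) := Real.sqrt_le_sqrt hsq
      _ = m * ‖z' - z‖ := Real.sqrt_sq h3
  have hinner : ∀ z' : WithLp 2 (H × EuclideanSpace ℝ (Fin m)),
      ⟪mkZ v (WithLp.toLp 2 (fun _ => σ)), z' - z⟫ = ⟪mkP v σ, phiMap z' - phiMap z⟫ := by
    intro z'
    have hd : phiMap z' - phiMap z = mkP (z'.fst - z.fst) (∑ i, (z'.snd - z.snd) i) := by
      rw [show phiMap z' = mkP z'.fst (∑ i, z'.snd i) from rfl,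
        show phiMap z = mkP z.fst (∑ i, z.snd i) from rfl, mkP_sub, ← Finset.sum_sub_distrib]
      rfl
    rw [inner_Z, hd, inner_mkP, mkP_fst, mkP_snd, Finset.mul_sum]
    rfl
  rw [frechet_iff] at hV ⊢
  refine ⟨Set.mem_iInter.mpr hz, fun ε hε => ?_⟩
  obtain ⟨η, hη, hb⟩ := hV.2 (ε / m) (by positivity)
  refine ⟨η / m, by positivity, fun z' hz' hzn => ?_⟩
  have hz'mem : ∀ i, z' ∈ psiMap i ⁻¹' epiSet (f i) := Set.mem_iInter.mp hz'
  have h1 : ‖phiMap z' - phiMap z‖ < η := by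
    calc ‖phiMap z' - phiMap z‖ ≤ m * ‖z' - z‖ := hlip z'
      _ < m * (η / m) := by
          apply mul_lt_mul_of_pos_left hzn hm0
      _ = η := by field_simp
  calc ⟪mkZ v (WithLp.toLp 2 (fun _ => σ)), z' - z⟫ = ⟪mkP v σ, phiMap z' - phiMap z⟫ := hinner z'
    _ ≤ (ε / m) * ‖phiMap z' - phiMap z‖ := hb _ (hmaps z' hz'mem) h1
    _ ≤ (ε / m) * (m * ‖z' - z‖) := by
        apply mul_le_mul_of_nonneg_left (hlip z') (by positivity)
    _ = ε * ‖z' - z‖ := by field_simp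

section Decoupling

variable {Z : Type*} [NormedAddCommGroup Z] [InnerProductSpace ℝ Z]

theorem norm_sq_expand1 (a b c : Z) :
    ‖a - c‖ ^ 2 = ‖b - c‖ ^ 2 + 2 * ⟪b - c, a - b⟫ + ‖a - b‖ ^ 2 := by
  have h : a - c = (b - c) + (a - b) := by abel
  rw [h, ← real_inner_self_eq_norm_sq, ← real_inner_self_eq_norm_sq,
    ← real_inner_self_eq_norm_sq, real_inner_add_add_self]

theorem norm_sq_expand2 (a b c : Z) :
    ‖a - b‖ ^ 2 = ‖a - c‖ ^ 2 - 2 * ⟪a - c, b - c⟫ + ‖b - c‖ ^ 2 := by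
  have h : a - b = (a - c) - (b - c) := by abel
  rw [h, ← real_inner_self_eq_norm_sq, ← real_inner_self_eq_norm_sq,
    ← real_inner_self_eq_norm_sq, real_inner_sub_sub_self]

/-- Exact decoupling (fuzzy intersection rule) in finite dimensions. -/
theorem decoupling [FiniteDimensional ℝ Z] {m : ℕ} (hm : 0 < m) {A : Fin m → Set Z}
    (hA : ∀ i, IsClosed (A i)) {z V : Z}
    (hV : V ∈ FrechetNormalCone (⋂ i, A i) z) {δ : ℝ} (hδ : 0 < δ) :
    ∃ w W : Fin m → Z, (∀ i, w i ∈ A i) ∧ (∀ i, ‖w i - z‖ ≤ δ) ∧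
      (∀ i, W i ∈ FrechetNormalCone (A i) (w i)) ∧ ‖(∑ i, W i) - V‖ ≤ δ := by
  classical
  set i0 : Fin m := ⟨0, hm⟩ with hi0def
  rw [frechet_iff] at hV
  obtain ⟨hzmem, hVb⟩ := hV
  have hzA : ∀ i, z ∈ A i := fun i => Set.mem_iInter.mp hzmem i
  set ε1 : ℝ := δ / 4 with hε1def
  have hε1 : 0 < ε1 := by rw [hε1def]; linarith
  obtain ⟨η, hη, hb⟩ := hVb ε1 hε1
  set r : ℝ := min δ (η / 2) with hrdef
  have hr : 0 < r := lt_min hδ (by linarith)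
  have hrδ : r ≤ δ := min_le_left _ _
  have hrη : r < η := lt_of_le_of_lt (min_le_right _ _) (by linarith)
  set ρ : ℝ := 2 * ε1 / r with hρdef
  have hρ : 0 < ρ := by positivity
  -- the constraint set
  set S : Set (Fin m → Z) := {w | ∀ i, w i ∈ A i ∧ ‖w i - z‖ ≤ r} with hSdef
  have hSne : (fun _ => z) ∈ S := fun i => ⟨hzA i, by simp [hr.le]⟩
  have hSclosed : IsClosed S := by
    have hSeq : S = ⋂ i, ((fun w : Fin m → Z => w i) ⁻¹' (A i ∩ Metric.closedBall z r)) := by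
      ext w
      simp only [hSdef, Set.mem_setOf_eq, Set.mem_iInter, Set.mem_preimage, Set.mem_inter_iff,
        Metric.mem_closedBall, dist_eq_norm]
    rw [hSeq]
    exact isClosed_iInter fun i =>
      ((hA i).inter Metric.isClosed_closedBall).preimage (continuous_apply i)
  have hSsub : S ⊆ Metric.closedBall (fun _ => z) r := by
    intro w hw
    rw [Metric.mem_closedBall, dist_pi_le_iff hr.le]
    intro i
    rw [dist_eq_norm]
    exact (hw i).2
  have hScompact : IsCompact S :=
    IsCompact.of_isClosed_subset (isCompact_closedBall _ _) hSclosed hSsub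
  -- the penalized objective
  set G : ℕ → (Fin m → Z) → ℝ := fun s w =>
    -⟪V, w i0⟫ + ρ * ‖w i0 - z‖ ^ 2 + ((s : ℝ) + 1) * ∑ j, ‖w j - w i0‖ ^ 2 with hGdef
  have hGcont : ∀ s, Continuous (G s) := by
    intro s
    exact ((continuous_const.inner (continuous_apply i0)).neg.add
      (continuous_const.mul (((continuous_apply i0).sub continuous_const).norm.pow 2))).add
      (continuous_const.mul (continuous_finset_sum _ fun j _ =>
        ((continuous_apply j).sub (continuous_apply i0)).norm.pow 2))
  have hmin : ∀ s : ℕ, ∃ w ∈ S, IsMinOn (G s) S w := fun s =>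
    hScompact.exists_isMinOn ⟨_, hSne⟩ (hGcont s).continuousOn
  choose w hwS hwmin using hmin
  -- key inequality from comparison with the constant `z`
  have hkey : ∀ s : ℕ, ρ * ‖w s i0 - z‖ ^ 2 + ((s:ℝ) + 1) * ∑ j, ‖w s j - w s i0‖ ^ 2
      ≤ ⟪V, w s i0 - z⟫ := by
    intro s
    have h1 : G s (w s) ≤ G s (fun _ => z) := hwmin s hSne
    have h2 : G s (fun _ => z) = -⟪V, z⟫ := by simp [hGdef]
    rw [h2] at h1
    simp only [hGdef] at h1
    simp only [inner_sub_right]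
    linarith
  -- extract a convergent subsequence
  obtain ⟨cbar, hcS, φ, hφ, hconv⟩ := hScompact.tendsto_subseq hwS
  have hconv_i : ∀ i, Tendsto (fun s => w (φ s) i) atTop (𝓝 (cbar i)) := fun i =>
    ((continuous_apply i).tendsto cbar).comp hconv
  have hVr : ∀ s : ℕ, ((s:ℝ) + 1) * ∑ j, ‖w s j - w s i0‖ ^ 2 ≤ ‖V‖ * r := by
    intro s
    have h1 := hkey s
    have h2 : ⟪V, w s i0 - z⟫ ≤ ‖V‖ * r := by
      calc ⟪V, w s i0 - z⟫ ≤ ‖V‖ * ‖w s i0 - z‖ := real_inner_le_norm _ _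
        _ ≤ ‖V‖ * r := mul_le_mul_of_nonneg_left ((hwS s i0).2) (norm_nonneg V)
    nlinarith [mul_nonneg hρ.le (sq_nonneg ‖w s i0 - z‖)]
  have hcagree : ∀ i, cbar i = cbar i0 := by
    intro i
    have hterm : ∀ s : ℕ, ‖w (φ s) i - w (φ s) i0‖ ^ 2 ≤ ‖V‖ * r / ((s:ℝ) + 1) := by
      intro s
      have h1 : ‖w (φ s) i - w (φ s) i0‖ ^ 2 ≤ ∑ j, ‖w (φ s) j - w (φ s) i0‖ ^ 2 :=
        Finset.single_le_sum (f := fun j => ‖w (φ s) j - w (φ s) i0‖ ^ 2)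
          (fun j _ => sq_nonneg _) (Finset.mem_univ i)
      have h2 := hVr (φ s)
      have h3 : (0:ℝ) < (φ s : ℝ) + 1 := by positivity
      have h4' : s ≤ φ s := hφ.le_apply
      have h4 : (s:ℝ) + 1 ≤ (φ s : ℝ) + 1 := by
        have : (s:ℝ) ≤ (φ s : ℝ) := by exact_mod_cast h4'
        linarith
      have h5 : ∑ j, ‖w (φ s) j - w (φ s) i0‖ ^ 2 ≤ ‖V‖ * r / ((φ s : ℝ) + 1) := by
        rw [le_div_iff₀ h3]; linarith
      have h6 : ‖V‖ * r / ((φ s:ℝ) + 1) ≤ ‖V‖ * r / ((s:ℝ) + 1) := by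
        apply div_le_div_of_nonneg_left _ (by positivity) h4
        have h7 : (0:ℝ) ≤ ⟪V, w (φ s) i0 - z⟫ := by
          have := hkey (φ s)
          nlinarith [mul_nonneg hρ.le (sq_nonneg ‖w (φ s) i0 - z‖),
            mul_nonneg h3.le (Finset.sum_nonneg (fun j (_ : j ∈ Finset.univ) =>
              sq_nonneg ‖w (φ s) j - w (φ s) i0‖))]
        nlinarith [norm_nonneg V, hr]
      calc ‖w (φ s) i - w (φ s) i0‖ ^ 2 ≤ ∑ j, ‖w (φ s) j - w (φ s) i0‖ ^ 2 := h1
        _ ≤ ‖V‖ * r / ((φ s:ℝ) + 1) := h5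
        _ ≤ ‖V‖ * r / ((s:ℝ) + 1) := h6
    have hlim1 : Tendsto (fun s => ‖w (φ s) i - w (φ s) i0‖ ^ 2) atTop
        (𝓝 (‖cbar i - cbar i0‖ ^ 2)) :=
      (((hconv_i i).sub (hconv_i i0)).norm).pow 2
    have hlim2 : Tendsto (fun s : ℕ => ‖V‖ * r / ((s:ℝ) + 1)) atTop (𝓝 0) := by
      have h := (tendsto_const_div_atTop_nhds_zero_nat (‖V‖ * r)).comp
        (tendsto_add_atTop_nat 1)
      have heq : (fun s : ℕ => ‖V‖ * r / ((s:ℝ) + 1))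
          = (fun n : ℕ => ‖V‖ * r / (n:ℝ)) ∘ (fun a => a + 1) := by
        funext s; simp [Function.comp]
      rw [heq]; exact h
    have hle := le_of_tendsto_of_tendsto' hlim1 hlim2 hterm
    have h7 : ‖cbar i - cbar i0‖ = 0 := by nlinarith [norm_nonneg (cbar i - cbar i0)]
    exact sub_eq_zero.mp (norm_eq_zero.mp h7)
  set c : Z := cbar i0 with hcdef
  have hcA : c ∈ ⋂ i, A i := Set.mem_iInter.mpr fun i => by
    have h := (hcS i).1; rwa [hcagree i] at h
  have hcr : ‖c - z‖ ≤ r := (hcS i0).2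
  have hρc : ρ * ‖c - z‖ ^ 2 ≤ ⟪V, c - z⟫ := by
    have hlim1 : Tendsto (fun s => ρ * ‖w (φ s) i0 - z‖ ^ 2) atTop
        (𝓝 (ρ * ‖c - z‖ ^ 2)) :=
      ((((hconv_i i0).sub tendsto_const_nhds).norm).pow 2).const_mul ρ
    have hlim2 : Tendsto (fun s => ⟪V, w (φ s) i0 - z⟫) atTop (𝓝 ⟪V, c - z⟫) :=
      tendsto_const_nhds.inner ((hconv_i i0).sub tendsto_const_nhds)
    refine le_of_tendsto_of_tendsto' hlim1 hlim2 fun s => ?_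
    have h1 := hkey (φ s)
    have h2 : (0:ℝ) ≤ ((φ s : ℝ) + 1) * ∑ j, ‖w (φ s) j - w (φ s) i0‖ ^ 2 := by
      apply mul_nonneg (by positivity)
      exact Finset.sum_nonneg (fun j _ => sq_nonneg _)
    linarith
  have hcr2 : ‖c - z‖ ≤ r / 2 := by
    have h1 : ⟪V, c - z⟫ ≤ ε1 * ‖c - z‖ := hb c hcA (lt_of_le_of_lt hcr hrη)
    have h2 : ρ * ‖c - z‖ ^ 2 ≤ ε1 * ‖c - z‖ := le_trans hρc h1
    rw [hρdef, div_mul_eq_mul_div, div_le_iff₀ hr] at h2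
    rcases eq_or_lt_of_le (norm_nonneg (c - z)) with h3 | h3
    · rw [← h3]; positivity
    · nlinarith [mul_pos hε1 h3]
  have hchoice : ∃ N, ∀ i, ‖w (φ N) i - cbar i‖ < r / 4 := by
    rw [Metric.tendsto_atTop] at hconv
    obtain ⟨N, hN⟩ := hconv (r / 4) (by positivity)
    refine ⟨N, fun i => ?_⟩
    have h1 : dist (w (φ N) i) (cbar i) ≤ dist (w (φ N)) cbar := dist_le_pi_dist _ _ i
    have h2 := hN N le_rfl
    rw [← dist_eq_norm]
    exact lt_of_le_of_lt h1 h2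
  obtain ⟨N, hN⟩ := hchoice
  set wst : Fin m → Z := w (φ N) with hwstdef
  set lam : ℝ := (φ N : ℝ) + 1 with hlamdef
  have hlam : 0 < lam := by positivity
  have hint : ∀ i, ‖wst i - z‖ < 3 * r / 4 := by
    intro i
    calc ‖wst i - z‖ ≤ ‖wst i - cbar i‖ + ‖cbar i - z‖ := by
          have h := norm_add_le (wst i - cbar i) (cbar i - z); simpa using h
      _ < r / 4 + r / 2 := add_lt_add_of_lt_of_le (hN i) (by rw [hcagree i]; exact hcr2)
      _ = 3 * r / 4 := by ring
  set W : Fin m → Z := fun i => if i = i0 then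
      V - (2 * ρ) • (wst i0 - z) + (2 * lam) • (∑ j ∈ Finset.univ.erase i0, (wst j - wst i0))
    else (2 * lam) • (wst i0 - wst i) with hWdef
  have hWi0 : W i0 = V - (2 * ρ) • (wst i0 - z)
      + (2 * lam) • (∑ j ∈ Finset.univ.erase i0, (wst j - wst i0)) := by
    rw [hWdef]; simp
  have hWne : ∀ i, i ≠ i0 → W i = (2 * lam) • (wst i0 - wst i) := by
    intro i hi; rw [hWdef]; simp [hi]
  have hWsum : ∑ i, W i = V - (2 * ρ) • (wst i0 - z) := by
    rw [← Finset.add_sum_erase _ W (Finset.mem_univ i0)]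
    have h1 : ∑ i ∈ Finset.univ.erase i0, W i
        = ∑ i ∈ Finset.univ.erase i0, (2 * lam) • (wst i0 - wst i) := by
      refine Finset.sum_congr rfl fun i hi => ?_
      simp only [Finset.mem_erase] at hi
      exact hWne i hi.1
    rw [h1, hWi0, ← Finset.smul_sum]
    have h2 : ∑ i ∈ Finset.univ.erase i0, (wst i0 - wst i)
        = -(∑ i ∈ Finset.univ.erase i0, (wst i - wst i0)) := by
      rw [← Finset.sum_neg_distrib]
      exact Finset.sum_congr rfl fun i _ => by abel
    rw [h2, smul_neg]
    abel
  refine ⟨wst, W, fun i => (hwS (φ N) i).1, fun i => le_trans (hint i).le (by linarith),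
    fun i => ?_, ?_⟩
  · -- Fréchet normality of each W i
    by_cases hi : i = i0
    · rw [hi, hWi0]
      apply frechet_of_quad (hwS (φ N) i0).1 (show (0:ℝ) < r/4 by positivity)
        (C := ρ + lam * ((Finset.univ.erase i0).card : ℝ))
      intro x hxA hxn
      have hxz : ‖x - z‖ ≤ r := by
        calc ‖x - z‖ ≤ ‖x - wst i0‖ + ‖wst i0 - z‖ := by
              have h := norm_add_le (x - wst i0) (wst i0 - z); simpa using h
          _ ≤ r / 4 + 3 * r / 4 := add_le_add hxn.le (hint i0).le
          _ = r := by ring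
      set w' : Fin m → Z := Function.update wst i0 x with hw'def
      have hw'S : w' ∈ S := by
        intro j
        by_cases hj : j = i0
        · subst hj; rw [hw'def]; simp only [Function.update_self]; exact ⟨hxA, hxz⟩
        · rw [hw'def]; simp only [Function.update_of_ne hj]; exact hwS (φ N) j
      have hmin' : G (φ N) wst ≤ G (φ N) w' := hwmin (φ N) hw'S
      simp only [hGdef] at hmin'
      rw [← hlamdef] at hmin'
      have hwi0 : w' i0 = x := by rw [hw'def]; exact Function.update_self _ _ _
      rw [hwi0] at hmin'
      have hnews : ∑ j, ‖w' j - x‖ ^ 2 = ∑ j ∈ Finset.univ.erase i0, ‖wst j - x‖ ^ 2 := by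
        rw [← Finset.add_sum_erase _ _ (Finset.mem_univ i0), hwi0]
        simp only [sub_self, norm_zero, ne_eq, OfNat.ofNat_ne_zero, not_false_eq_true,
          zero_pow, zero_add]
        refine Finset.sum_congr rfl fun j hj => ?_
        simp only [Finset.mem_erase] at hj
        rw [hw'def, Function.update_of_ne hj.1]
      have holds : ∑ j, ‖wst j - wst i0‖ ^ 2
          = ∑ j ∈ Finset.univ.erase i0, ‖wst j - wst i0‖ ^ 2 := by
        rw [← Finset.add_sum_erase _ _ (Finset.mem_univ i0)]
        simp
      rw [hnews, holds] at hmin'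
      set e : Z := x - wst i0 with hedef
      set Sig : Z := ∑ j ∈ Finset.univ.erase i0, (wst j - wst i0) with hSigdef
      have hsum2 : ∑ j ∈ Finset.univ.erase i0, ‖wst j - x‖ ^ 2
          = ∑ j ∈ Finset.univ.erase i0, ‖wst j - wst i0‖ ^ 2
            - 2 * ⟪Sig, e⟫ + ((Finset.univ.erase i0).card : ℝ) * ‖e‖ ^ 2 := by
        have hexp2 : ∀ j, ‖wst j - x‖ ^ 2 = ‖wst j - wst i0‖ ^ 2
            - 2 * ⟪wst j - wst i0, e⟫ + ‖e‖ ^ 2 := fun j =>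
          norm_sq_expand2 (wst j) x (wst i0)
        rw [Finset.sum_congr rfl fun j _ => hexp2 j, Finset.sum_add_distrib,
          Finset.sum_sub_distrib, ← Finset.mul_sum, ← sum_inner, Finset.sum_const,
          nsmul_eq_mul, ← hSigdef]
      have hexpx : ρ * ‖x - z‖ ^ 2 = ρ * ‖wst i0 - z‖ ^ 2
          + 2 * (ρ * ⟪wst i0 - z, e⟫) + ρ * ‖e‖ ^ 2 := by
        rw [norm_sq_expand1 x (wst i0) z, ← hedef]; ring
      have hVx : ⟪V, x⟫ = ⟪V, wst i0⟫ + ⟪V, e⟫ := by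
        rw [hedef, inner_sub_right]; ring
      have hsum2' : lam * ∑ j ∈ Finset.univ.erase i0, ‖wst j - x‖ ^ 2
          = lam * ∑ j ∈ Finset.univ.erase i0, ‖wst j - wst i0‖ ^ 2
            - 2 * (lam * ⟪Sig, e⟫)
            + lam * ((Finset.univ.erase i0).card : ℝ) * ‖e‖ ^ 2 := by
        rw [hsum2]; ring
      have hginner : ⟪V - (2 * ρ) • (wst i0 - z) + (2 * lam) • Sig, e⟫
          = ⟪V, e⟫ - 2 * (ρ * ⟪wst i0 - z, e⟫) + 2 * (lam * ⟪Sig, e⟫) := by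
        rw [inner_add_left, inner_sub_left, real_inner_smul_left, real_inner_smul_left]
        ring
      rw [hginner]
      rw [hVx, hexpx] at hmin'
      nlinarith [hmin', hsum2']
    · rw [hWne i hi]
      apply frechet_of_quad (hwS (φ N) i).1 (show (0:ℝ) < r/4 by positivity) (C := lam)
      intro x hxA hxn
      have hxz : ‖x - z‖ ≤ r := by
        calc ‖x - z‖ ≤ ‖x - wst i‖ + ‖wst i - z‖ := by
              have h := norm_add_le (x - wst i) (wst i - z); simpa using h
          _ ≤ r / 4 + 3 * r / 4 := add_le_add hxn.le (hint i).le
          _ = r := by ring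
      set w' : Fin m → Z := Function.update wst i x with hw'def
      have hw'S : w' ∈ S := by
        intro j
        by_cases hj : j = i
        · subst hj; rw [hw'def]; simp only [Function.update_self]; exact ⟨hxA, hxz⟩
        · rw [hw'def]; simp only [Function.update_of_ne hj]; exact hwS (φ N) j
      have hmin' : G (φ N) wst ≤ G (φ N) w' := hwmin (φ N) hw'S
      simp only [hGdef] at hmin'
      rw [← hlamdef] at hmin'
      have hw'i0 : w' i0 = wst i0 := by
        rw [hw'def]; exact Function.update_of_ne (fun h => hi h.symm) _ _
      rw [hw'i0] at hmin'
      have hw'i : w' i = x := by rw [hw'def]; exact Function.update_self _ _ _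
      have hnews : ∑ j, ‖w' j - wst i0‖ ^ 2
          = ‖x - wst i0‖ ^ 2 + ∑ j ∈ Finset.univ.erase i, ‖wst j - wst i0‖ ^ 2 := by
        rw [← Finset.add_sum_erase _ _ (Finset.mem_univ i), hw'i]
        congr 1
        refine Finset.sum_congr rfl fun j hj => ?_
        simp only [Finset.mem_erase] at hj
        rw [hw'def, Function.update_of_ne hj.1]
      have holds : ∑ j, ‖wst j - wst i0‖ ^ 2
          = ‖wst i - wst i0‖ ^ 2 + ∑ j ∈ Finset.univ.erase i, ‖wst j - wst i0‖ ^ 2 := by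
        rw [← Finset.add_sum_erase _ _ (Finset.mem_univ i)]
      rw [hnews, holds] at hmin'
      have hexp : ‖x - wst i0‖ ^ 2 = ‖wst i - wst i0‖ ^ 2
          + 2 * ⟪wst i - wst i0, x - wst i⟫ + ‖x - wst i‖ ^ 2 :=
        norm_sq_expand1 x (wst i) (wst i0)
      have hginner : ⟪(2 * lam) • (wst i0 - wst i), x - wst i⟫
          = -2 * (lam * ⟪wst i - wst i0, x - wst i⟫) := by
        rw [real_inner_smul_left, show wst i0 - wst i = -(wst i - wst i0) by abel,
          inner_neg_left]
        ring
      rw [hginner]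
      have hkey2 : 0 ≤ lam * (2 * ⟪wst i - wst i0, x - wst i⟫ + ‖x - wst i‖ ^ 2) := by
        nlinarith [hmin', hexp]
      nlinarith [hkey2]
  · rw [hWsum]
    have heq : V - (2 * ρ) • (wst i0 - z) - V = -((2 * ρ) • (wst i0 - z)) := by abel
    rw [heq, norm_neg, norm_smul, Real.norm_eq_abs,
      abs_of_pos (by positivity : (0:ℝ) < 2 * ρ)]
    calc 2 * ρ * ‖wst i0 - z‖ ≤ 2 * ρ * r := by
          apply mul_le_mul_of_nonneg_left (le_trans (hint i0).le (by linarith)) (by positivity)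
      _ = δ := by rw [hρdef]; field_simp; ring

end Decoupling

/-! ### EReal sum helpers -/

theorem ereal_sum_ne_bot {ι : Type*} (s : Finset ι) (g : ι → EReal)
    (h : ∀ i ∈ s, g i ≠ ⊥) : ∑ i ∈ s, g i ≠ ⊥ := by
  classical
  induction s using Finset.induction_on with
  | empty => simp
  | @insert a t ha ih =>
    rw [Finset.sum_insert ha]
    intro hc
    rcases EReal.add_eq_bot_iff.mp hc with h1 | h1
    · exact h a (Finset.mem_insert_self a t) h1
    · exact ih (fun i hi => h i (Finset.mem_insert_of_mem hi)) h1

theorem ereal_sum_ne_top {ι : Type*} (s : Finset ι) (g : ι → EReal)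
    (h : ∀ i ∈ s, g i ≠ ⊤) : ∑ i ∈ s, g i ≠ ⊤ := by
  classical
  induction s using Finset.induction_on with
  | empty => simp
  | @insert a t ha ih =>
    rw [Finset.sum_insert ha]
    exact (EReal.add_lt_top (h a (Finset.mem_insert_self a t))
      (ih fun i hi => h i (Finset.mem_insert_of_mem hi))).ne

theorem ereal_ne_top_of_sum {ι : Type*} {s : Finset ι} {g : ι → EReal}
    (hsum : ∑ i ∈ s, g i ≠ ⊤) (hbot : ∀ i ∈ s, g i ≠ ⊥) : ∀ i ∈ s, g i ≠ ⊤ := by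
  classical
  intro i hi hc
  apply hsum
  rw [← Finset.add_sum_erase _ _ hi, hc]
  exact EReal.top_add_of_ne_bot (ereal_sum_ne_bot _ _ fun j hj =>
    hbot j (Finset.mem_of_mem_erase hj))

theorem ereal_toReal_sum {ι : Type*} (s : Finset ι) (g : ι → EReal)
    (htop : ∀ i ∈ s, g i ≠ ⊤) (hbot : ∀ i ∈ s, g i ≠ ⊥) :
    (∑ i ∈ s, g i).toReal = ∑ i ∈ s, (g i).toReal := by
  classical
  induction s using Finset.induction_on with
  | empty => simp
  | @insert a t ha ih =>
    rw [Finset.sum_insert ha, Finset.sum_insert ha,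
      EReal.toReal_add (htop a (Finset.mem_insert_self a t))
        (hbot a (Finset.mem_insert_self a t))
        (ereal_sum_ne_top _ _ fun i hi => htop i (Finset.mem_insert_of_mem hi))
        (ereal_sum_ne_bot _ _ fun i hi => hbot i (Finset.mem_insert_of_mem hi)),
      ih (fun i hi => htop i (Finset.mem_insert_of_mem hi))
        (fun i hi => hbot i (Finset.mem_insert_of_mem hi))]

/-! ### Convergence plumbing in `H ×₂ ℝ` -/

theorem bounded_of_tendsto_real {g : ℕ → ℝ} {L : ℝ} (h : Tendsto g atTop (𝓝 L)) :
    ∃ C : ℝ, ∀ k, |g k| ≤ C := by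
  obtain ⟨N, hN⟩ := (Metric.tendsto_atTop.mp h) 1 one_pos
  refine ⟨(∑ k ∈ Finset.range N, |g k|) + |L| + 1, fun k => ?_⟩
  have hsum : (0:ℝ) ≤ ∑ k ∈ Finset.range N, |g k| :=
    Finset.sum_nonneg fun j _ => abs_nonneg _
  rcases lt_or_ge k N with hk | hk
  · have h1 : |g k| ≤ ∑ j ∈ Finset.range N, |g j| :=
      Finset.single_le_sum (f := fun j => |g j|) (fun j _ => abs_nonneg _)
        (Finset.mem_range.mpr hk)
    have h2 : (0:ℝ) ≤ |L| := abs_nonneg _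
    linarith
  · have h1 := hN k hk
    rw [Real.dist_eq] at h1
    have h2 : |g k| ≤ |L| + 1 := by
      have := abs_sub_abs_le_abs_sub (g k) L
      linarith
    linarith

theorem tendsto_one_div_k : Tendsto (fun k : ℕ => 1 / ((k:ℝ) + 1)) atTop (𝓝 0) := by
  have h := (tendsto_const_div_atTop_nhds_zero_nat (𝕜 := ℝ) 1).comp (tendsto_add_atTop_nat 1)
  have heq : (fun k : ℕ => 1 / ((k:ℝ) + 1)) = (fun n : ℕ => 1 / (n:ℝ)) ∘ (fun a => a + 1) := by
    funext s; simp [Function.comp]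
  rw [heq]; exact h

theorem tendsto_W2_of_components {u : ℕ → WithLp 2 (H × ℝ)} {a : H} {b : ℝ}
    (ha : Tendsto (fun k => (u k).fst) atTop (𝓝 a))
    (hb : Tendsto (fun k => (u k).snd) atTop (𝓝 b)) :
    Tendsto (fun k => WithLp.equiv 2 (H × ℝ) (u k)) atTop (𝓝 (a, b)) := by
  have h := ha.prodMk_nhds hb
  have heq : (fun k => WithLp.equiv 2 (H × ℝ) (u k)) = fun k => ((u k).fst, (u k).snd) := by
    funext k; rfl
  rw [heq]; exact h

theorem components_of_tendsto_W2 {u : ℕ → WithLp 2 (H × ℝ)} {q : H × ℝ}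
    (h : Tendsto (fun k => WithLp.equiv 2 (H × ℝ) (u k)) atTop (𝓝 q)) :
    Tendsto (fun k => (u k).fst) atTop (𝓝 q.1) ∧
      Tendsto (fun k => (u k).snd) atTop (𝓝 q.2) :=
  ⟨(continuous_fst.tendsto q).comp h, (continuous_snd.tendsto q).comp h⟩

/-- Building a member of `NclAtInfty` from Fréchet normals at graph points. -/
theorem mem_NclAtInfty_of_frechet {f : H → EReal} {xs : ℕ → H} {vs : ℕ → WithLp 2 (H × ℝ)}
    (h1 : ∀ k, f (xs k) ≠ ⊤)
    (h2 : Tendsto (fun k => ‖xs k‖) atTop atTop)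
    (h3 : ∀ k, vs k ∈ FrechetNormalCone (epiSet f) (mkP (xs k) (f (xs k)).toReal))
    {a : H} {b : ℝ}
    (h4 : Tendsto (fun k => (vs k).fst) atTop (𝓝 a))
    (h5 : Tendsto (fun k => (vs k).snd) atTop (𝓝 b)) :
    (a, b) ∈ NclAtInfty f :=
  ⟨xs, vs, h1, h2, fun k => frechet_mem_limiting (h3 k),
    tendsto_W2_of_components h4 h5⟩

/-- Diagonalization: members of `NclAtInfty` are limits of Fréchet normals at
epigraph points escaping to horizontal infinity. -/
theorem diagonal {f : H → EReal} {q : H × ℝ} (hq : q ∈ NclAtInfty f) :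
    ∃ P V : ℕ → WithLp 2 (H × ℝ),
      (∀ k, P k ∈ epiSet f) ∧ (∀ k, V k ∈ FrechetNormalCone (epiSet f) (P k)) ∧
      Tendsto (fun k => ‖(P k).fst‖) atTop atTop ∧
      Tendsto (fun k => (V k).fst) atTop (𝓝 q.1) ∧
      Tendsto (fun k => (V k).snd) atTop (𝓝 q.2) := by
  obtain ⟨xs, ws, hne, hxs, hmem, hlim⟩ := hq
  have key : ∀ k : ℕ, ∃ p v : WithLp 2 (H × ℝ), p ∈ epiSet f ∧
      v ∈ FrechetNormalCone (epiSet f) p ∧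
      ‖p - mkP (xs k) ((f (xs k)).toReal)‖ < 1 / ((k:ℝ) + 1) ∧
      ‖v - ws k‖ < 1 / ((k:ℝ) + 1) := by
    intro k
    obtain ⟨ys, vs, hfr, hys, hvs⟩ := hmem k
    have hpos : (0:ℝ) < 1 / ((k:ℝ) + 1) := by positivity
    obtain ⟨l1, hl1⟩ := (Metric.tendsto_atTop.mp hys) _ hpos
    obtain ⟨l2, hl2⟩ := (Metric.tendsto_atTop.mp hvs) _ hpos
    refine ⟨ys (max l1 l2), vs (max l1 l2), (hfr (max l1 l2)).1, hfr _, ?_, ?_⟩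
    · have := hl1 _ (le_max_left l1 l2); rwa [dist_eq_norm] at this
    · have := hl2 _ (le_max_right l1 l2); rwa [dist_eq_norm] at this
  choose P V hPepi hPfr hPd hVd using key
  obtain ⟨hwfst, hwsnd⟩ := components_of_tendsto_W2 hlim
  have honeover := tendsto_one_div_k
  -- fst norms go to infinity
  have hPfst : Tendsto (fun k => ‖(P k).fst‖) atTop atTop := by
    apply tendsto_atTop_mono (fun k => ?_)
      (tendsto_atTop_add_const_right _ (-1 : ℝ) hxs)
    have h1 : ‖(P k).fst - xs k‖ ≤ ‖P k - mkP (xs k) ((f (xs k)).toReal)‖ := by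
      have : (P k - mkP (xs k) ((f (xs k)).toReal)).fst = (P k).fst - xs k := rfl
      rw [← this]; exact fst_norm_le _
    have h2 : ‖(P k).fst - xs k‖ ≤ 1 := by
      refine le_trans h1 (le_trans (hPd k).le ?_)
      rw [div_le_one (by positivity)]
      have : (0:ℝ) ≤ (k:ℝ) := Nat.cast_nonneg k
      linarith
    have h3 := norm_sub_norm_le ((P k).fst) (xs k)
    have h4 : ‖(P k).fst‖ ≥ ‖xs k‖ - ‖(P k).fst - xs k‖ := by
      have := abs_sub_abs_le_abs_sub ‖(P k).fst‖ ‖xs k‖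
      have h5 := abs_le.mp (abs_norm_sub_norm_le ((P k).fst) (xs k))
      linarith [h5.1]
    linarith
  -- components of V converge
  have hVfst : Tendsto (fun k => (V k).fst) atTop (𝓝 q.1) := by
    have hdiff : Tendsto (fun k => (V k).fst - (ws k).fst) atTop (𝓝 0) := by
      apply squeeze_zero_norm (fun k => ?_) honeover
      have heq : (V k - ws k).fst = (V k).fst - (ws k).fst := rfl
      rw [← heq]
      exact le_trans (fst_norm_le _) (hVd k).le
    have := hdiff.add hwfst
    simpa using this
  have hVsnd : Tendsto (fun k => (V k).snd) atTop (𝓝 q.2) := by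
    have hdiff : Tendsto (fun k => (V k).snd - (ws k).snd) atTop (𝓝 0) := by
      apply squeeze_zero_norm (fun k => ?_) honeover
      have heq : (V k - ws k).snd = (V k).snd - (ws k).snd := rfl
      rw [Real.norm_eq_abs, ← heq]
      exact le_trans (snd_abs_le _) (hVd k).le
    have := hdiff.add hwsnd
    simpa using this
  exact ⟨P, V, hPepi, hPfr, hPfst, hVfst, hVsnd⟩

theorem contW_fst : Continuous (fun p : WithLp 2 (H × ℝ) => p.fst) :=
  continuous_fst.comp (WithLp.prod_continuous_ofLp 2 H ℝ)

theorem contW_snd : Continuous (fun p : WithLp 2 (H × ℝ) => p.snd) :=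
  continuous_snd.comp (WithLp.prod_continuous_ofLp 2 H ℝ)

theorem Zsum_fst {m : ℕ} {ι : Type*} (s : Finset ι)
    (g : ι → WithLp 2 (H × EuclideanSpace ℝ (Fin m))) :
    (∑ i ∈ s, g i).fst = ∑ i ∈ s, (g i).fst := by
  classical
  induction s using Finset.induction_on with
  | empty => rfl
  | @insert a t ha ih => rw [Finset.sum_insert ha, Finset.sum_insert ha, ← ih]; rfl

theorem Zsum_snd_apply {m : ℕ} {ι : Type*} (s : Finset ι)
    (g : ι → WithLp 2 (H × EuclideanSpace ℝ (Fin m))) (j : Fin m) :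
    (∑ i ∈ s, g i).snd j = ∑ i ∈ s, (g i).snd j := by
  classical
  induction s using Finset.induction_on with
  | empty => rfl
  | @insert a t ha ih => rw [Finset.sum_insert ha, Finset.sum_insert ha, ← ih]; rfl

theorem Wsum_fst {ι : Type*} (s : Finset ι) (g : ι → WithLp 2 (H × ℝ)) :
    (∑ i ∈ s, g i).fst = ∑ i ∈ s, (g i).fst := by
  classical
  induction s using Finset.induction_on with
  | empty => rfl
  | @insert a t ha ih => rw [Finset.sum_insert ha, Finset.sum_insert ha, ← ih]; rfl

/-- The main decomposition lemma at infinity. -/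
theorem main_decomp {n m : ℕ} (hm : 2 ≤ m)
    (f : Fin m → EuclideanSpace ℝ (Fin n) → EReal)
    (hlsc : ∀ i, LowerSemicontinuous (f i)) (hbot : ∀ i x, f i x ≠ ⊥)
    (hQC : ∀ u : Fin m → EuclideanSpace ℝ (Fin n),
      (∀ i, u i ∈ singSubInfty (f i)) → (∑ i, u i) = 0 → ∀ i, u i = 0)
    {u : EuclideanSpace ℝ (Fin n)} {s : ℝ}
    (hq : (u, s) ∈ NclAtInfty (fun x => ∑ i, f i x)) :
    ∃ g : Fin m → EuclideanSpace ℝ (Fin n),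
      (∀ i, (g i, s) ∈ NclAtInfty (f i)) ∧ ∑ i, g i = u := by
  classical
  haveI hfdW : FiniteDimensional ℝ (WithLp 2 (EuclideanSpace ℝ (Fin n) × ℝ)) :=
    Module.Finite.of_surjective (WithLp.linearEquiv 2 ℝ _).symm.toLinearMap
      (WithLp.linearEquiv 2 ℝ _).symm.surjective
  haveI hfdZ : FiniteDimensional ℝ
      (WithLp 2 (EuclideanSpace ℝ (Fin n) × EuclideanSpace ℝ (Fin m))) :=
    Module.Finite.of_surjective (WithLp.linearEquiv 2 ℝ _).symm.toLinearMap
      (WithLp.linearEquiv 2 ℝ _).symm.surjective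
  have hm0 : 0 < m := lt_of_lt_of_le (by norm_num) hm
  have hm1 : 1 ≤ m := le_trans (by norm_num) hm
  obtain ⟨P, V, hPepi, hPfr, hPnorm, hVfst, hVsnd⟩ := diagonal hq
  set δs : ℕ → ℝ := fun k => 1 / ((k:ℝ) + 1) with hδdef
  have hδpos : ∀ k, 0 < δs k := fun k => by positivity
  have hδ1 : ∀ k, δs k ≤ 1 := fun k => by
    rw [hδdef, div_le_one (by positivity)]
    have : (0:ℝ) ≤ (k:ℝ) := Nat.cast_nonneg k
    linarith
  have hδ0 : Tendsto δs atTop (𝓝 0) := tendsto_one_div_k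
  -- basic finiteness facts
  have hFP : ∀ k, (∑ i, f i ((P k).fst)) ≤ (((P k).snd : ℝ) : EReal) := fun k => hPepi k
  have hFtop : ∀ k, (∑ i, f i ((P k).fst)) ≠ ⊤ := fun k => by
    intro hc
    have h := hFP k
    rw [hc] at h
    exact absurd h (by simp)
  have hftop : ∀ k i, f i ((P k).fst) ≠ ⊤ := fun k i =>
    ereal_ne_top_of_sum (hFtop k) (fun j _ => hbot j _) i (Finset.mem_univ i)
  have hFbot : ∀ k, (∑ i, f i ((P k).fst)) ≠ ⊥ := fun k =>
    ereal_sum_ne_bot _ _ fun j _ => hbot j _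
  have htR : ∀ k, (∑ i, f i ((P k).fst)).toReal ≤ (P k).snd := fun k => by
    have h1 := EReal.toReal_le_toReal (hFP k) (hFbot k) (EReal.coe_ne_top _)
    simpa using h1
  -- decomposition of the epigraph point into the fiber product
  set α : ℕ → Fin m → ℝ := fun k i =>
    (f i ((P k).fst)).toReal + ((P k).snd - (∑ i, f i ((P k).fst)).toReal) / m with hαdef
  set zc : ℕ → WithLp 2 (EuclideanSpace ℝ (Fin n) × EuclideanSpace ℝ (Fin m)) :=
    fun k => mkZ ((P k).fst) (WithLp.toLp 2 (α k)) with hzdef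
  have hznd : ∀ k, (zc k).snd.ofLp = α k := fun k => rfl
  have hz : ∀ k i, zc k ∈ psiMap i ⁻¹' epiSet (f i) := by
    intro k i
    show psiMap i (zc k) ∈ epiSet (f i)
    have hψ : psiMap i (zc k) = mkP ((P k).fst) (α k i) := rfl
    rw [hψ, mem_epiSet_mkP]
    have h1 : f i ((P k).fst) = (((f i ((P k).fst)).toReal : ℝ) : EReal) :=
      (EReal.coe_toReal (hftop k i) (hbot i _)).symm
    calc f i ((P k).fst) = (((f i ((P k).fst)).toReal : ℝ) : EReal) := h1
      _ ≤ ((α k i : ℝ) : EReal) := by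
          rw [EReal.coe_le_coe_iff, hαdef]
          have h2 := htR k
          have h3 : (0:ℝ) < m := by exact_mod_cast hm0
          have h4 : 0 ≤ ((P k).snd - (∑ i, f i ((P k).fst)).toReal) / m := by
            apply div_nonneg _ h3.le
            linarith
          linarith
  have hphi : ∀ k, phiMap (zc k) = P k := by
    intro k
    have hts : ∑ i, (f i ((P k).fst)).toReal = (∑ i, f i ((P k).fst)).toReal :=
      (ereal_toReal_sum Finset.univ _ (fun i _ => hftop k i) (fun i _ => hbot i _)).symm
    have hsum : ∑ i, α k i = (P k).snd := by
      rw [hαdef]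
      rw [Finset.sum_add_distrib, Finset.sum_const, Finset.card_univ, Fintype.card_fin,
        hts, nsmul_eq_mul]
      have h3 : (m:ℝ) ≠ 0 := by positivity
      field_simp
      ring
    have hstep : phiMap (zc k) = mkP ((P k).fst) (∑ i, (zc k).snd i) := rfl
    rw [hstep, hznd, hsum]
    exact mkP_eta _
  -- pull back the normals
  have hVZ : ∀ k, mkZ ((V k).fst) (WithLp.toLp 2 (fun _ => (V k).snd)) ∈
      FrechetNormalCone (⋂ i, psiMap i ⁻¹' epiSet (f i)) (zc k) := by
    intro k
    apply pullback_normal hm1 (fun i => hz k i)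
    rw [hphi k]
    have : mkP ((V k).fst) ((V k).snd) = V k := mkP_eta _
    rw [this]
    exact hPfr k
  -- continuity of the coordinate projections
  have cont_psiMap : ∀ i : Fin m,
      Continuous (psiMap (H := EuclideanSpace ℝ (Fin n)) i) := by
    intro i
    unfold psiMap mkP
    apply (WithLp.prod_continuous_toLp _ _ _).comp
    apply Continuous.prodMk
    · exact continuous_fst.comp (WithLp.prod_continuous_ofLp _ _ _)
    · exact (PiLp.continuous_apply _ _ i).comp (continuous_snd.comp (WithLp.prod_continuous_ofLp _ _ _))
  -- decoupling at each k
  have hdec : ∀ k : ℕ, ∃ w W : Fin m →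
      WithLp 2 (EuclideanSpace ℝ (Fin n) × EuclideanSpace ℝ (Fin m)),
      (∀ i, w i ∈ psiMap i ⁻¹' epiSet (f i)) ∧ (∀ i, ‖w i - zc k‖ ≤ δs k) ∧
      (∀ i, W i ∈ FrechetNormalCone (psiMap i ⁻¹' epiSet (f i)) (w i)) ∧
      ‖(∑ i, W i) - mkZ ((V k).fst) (WithLp.toLp 2 (fun _ => (V k).snd))‖ ≤ δs k := fun k =>
    decoupling hm0 (fun i => (epi_isClosed (hlsc i)).preimage (cont_psiMap i))
      (hVZ k) (hδpos k)
  choose wv Wv hwmem hwnear hWmem hWnorm using hdec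
  -- extract epigraph normals from the cylinder normals
  set xv : ℕ → Fin m → EuclideanSpace ℝ (Fin n) := fun k i => (wv k i).fst with hxvdef
  set av : ℕ → Fin m → EuclideanSpace ℝ (Fin n) := fun k i => (Wv k i).fst with havdef
  set τv : ℕ → Fin m → ℝ := fun k i => (Wv k i).snd i with hτdef
  have hext : ∀ k i, (∀ j, j ≠ i → (Wv k i).snd j = 0) ∧
      mkP (av k i) (τv k i) ∈ FrechetNormalCone (epiSet (f i)) (psiMap i (wv k i)) :=
    fun k i => cyl_normal_extract (hWmem k i)
  have hgraph : ∀ k i, f i (xv k i) ≠ ⊤ ∧ mkP (av k i) (τv k i) ∈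
      FrechetNormalCone (epiSet (f i)) (mkP (xv k i) ((f i (xv k i)).toReal)) := by
    intro k i
    have h1 : mkP (av k i) (τv k i) ∈
        FrechetNormalCone (epiSet (f i)) (mkP (xv k i) ((wv k i).snd i)) := (hext k i).2
    have h2 := normalizeToGraph h1 (hbot i (xv k i))
    have h3 : (mkP (av k i) (τv k i)).snd = τv k i := rfl
    exact h2
  -- norm controls
  have hxnear : ∀ k i, ‖xv k i - (P k).fst‖ ≤ δs k := by
    intro k i
    have h1 : (wv k i - zc k).fst = xv k i - (P k).fst := rfl
    calc ‖xv k i - (P k).fst‖ = ‖(wv k i - zc k).fst‖ := by rw [h1]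
      _ ≤ ‖wv k i - zc k‖ := Zfst_norm_le _
      _ ≤ δs k := hwnear k i
  have hxlow : ∀ k i, ‖(P k).fst‖ - 1 ≤ ‖xv k i‖ := by
    intro k i
    have h1 := hxnear k i
    have h2 := hδ1 k
    have h3 := abs_le.mp (abs_norm_sub_norm_le (xv k i) ((P k).fst))
    linarith [h3.1]
  -- component controls
  have hsumfst : ∀ k, (∑ i, Wv k i).fst = ∑ i, av k i := fun k => Zsum_fst _ _
  have hsumsnd : ∀ k j, (∑ i, Wv k i).snd j = τv k j := by
    intro k j
    rw [Zsum_snd_apply]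
    rw [Finset.sum_eq_single j]
    · intro b _ hbne
      exact (hext k b).1 j (fun h => hbne h.symm)
    · intro h; exact absurd (Finset.mem_univ j) h
  have hτclose : ∀ k i, |τv k i - (V k).snd| ≤ δs k := by
    intro k i
    have h1 : ((∑ j, Wv k j) - mkZ ((V k).fst) (WithLp.toLp 2 (fun _ => (V k).snd))).snd i
        = τv k i - (V k).snd := by
      have h0 : ((∑ j, Wv k j) - mkZ ((V k).fst) (WithLp.toLp 2 (fun _ => (V k).snd))).snd i
          = (∑ j, Wv k j).snd i - (V k).snd := rfl
      rw [h0, hsumsnd k i]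
    calc |τv k i - (V k).snd|
        = |((∑ j, Wv k j) - mkZ ((V k).fst) (WithLp.toLp 2 (fun _ => (V k).snd))).snd i| := by rw [h1]
      _ ≤ ‖(∑ j, Wv k j) - mkZ ((V k).fst) (WithLp.toLp 2 (fun _ => (V k).snd))‖ := Zsnd_abs_le _ i
      _ ≤ δs k := hWnorm k
  have haclose : ∀ k, ‖(∑ i, av k i) - (V k).fst‖ ≤ δs k := by
    intro k
    have h1 : ((∑ j, Wv k j) - mkZ ((V k).fst) (WithLp.toLp 2 (fun _ => (V k).snd))).fst
        = (∑ i, av k i) - (V k).fst := by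
      have h0 : ((∑ j, Wv k j) - mkZ ((V k).fst) (WithLp.toLp 2 (fun _ => (V k).snd))).fst
          = (∑ j, Wv k j).fst - (V k).fst := rfl
      rw [h0, hsumfst k]
    calc ‖(∑ i, av k i) - (V k).fst‖
        = ‖((∑ j, Wv k j) - mkZ ((V k).fst) (WithLp.toLp 2 (fun _ => (V k).snd))).fst‖ := by rw [h1]
      _ ≤ ‖(∑ j, Wv k j) - mkZ ((V k).fst) (WithLp.toLp 2 (fun _ => (V k).snd))‖ := Zfst_norm_le _
      _ ≤ δs k := hWnorm k
  -- global bounds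
  obtain ⟨Cτ, hCτ⟩ := bounded_of_tendsto_real hVsnd
  obtain ⟨Ca, hCa⟩ := bounded_of_tendsto_real (g := fun k => ‖(V k).fst‖) hVfst.norm
  have hτbound : ∀ k i, |τv k i| ≤ Cτ + 1 := by
    intro k i
    have h1 := hτclose k i
    have h2 := hCτ k
    have h3 := hδ1 k
    have h4 := abs_sub_abs_le_abs_sub (τv k i) ((V k).snd)
    linarith
  have habound : ∀ k, ‖∑ i, av k i‖ ≤ Ca + 1 := by
    intro k
    have h1 := haclose k
    have h2 := hCa k
    have h3 := hδ1 k
    have h4 := abs_le.mp (abs_norm_sub_norm_le (∑ i, av k i) ((V k).fst))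
    have h5 : |‖(V k).fst‖| = ‖(V k).fst‖ := abs_of_nonneg (norm_nonneg _)
    rw [h5] at h2
    linarith [h4.1]
  -- the sequence of normal vectors and its total mass
  set B : ℕ → Fin m → WithLp 2 (EuclideanSpace ℝ (Fin n) × ℝ) :=
    fun k i => mkP (av k i) (τv k i) with hBdef
  set M : ℕ → ℝ := fun k => ∑ i, ‖B k i‖ with hMdef
  have hMnonneg : ∀ k, 0 ≤ M k := fun k => Finset.sum_nonneg fun i _ => norm_nonneg _
  have hBleM : ∀ k i, ‖B k i‖ ≤ M k := fun k i =>
    Finset.single_le_sum (f := fun i => ‖B k i‖) (fun i _ => norm_nonneg _)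
      (Finset.mem_univ i)
  -- the total mass is bounded, by the qualification condition
  have hMbdd : ∃ R, ∀ k, M k ≤ R := by
    by_contra hcon
    push_neg at hcon
    have hfreq : ∀ j : ℕ, ∃ᶠ k in atTop, (j:ℝ) + 1 < M k := by
      intro j
      rw [Filter.frequently_atTop]
      intro N
      obtain ⟨b, hb⟩ := (Set.finite_range (fun t : Fin N => M t)).bddAbove
      obtain ⟨k, hk⟩ := hcon (max b ((j:ℝ) + 1))
      refine ⟨k, ?_, lt_of_le_of_lt (le_max_right _ _) hk⟩
      by_contra hkN
      push_neg at hkN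
      have h1 : M k ≤ b := hb ⟨⟨k, hkN⟩, rfl⟩
      have h2 := lt_of_le_of_lt (le_max_left b ((j:ℝ)+1)) hk
      linarith
    obtain ⟨φ, hφmono, hφP⟩ := Filter.extraction_forall_of_frequently hfreq
    have hMpos : ∀ j, 0 < M (φ j) := by
      intro j
      have h0 : (0:ℝ) < (j:ℝ) + 1 := by positivity
      linarith [hφP j]
    have hMlow : ∀ j : ℕ, (j:ℝ) + 1 ≤ M (φ j) := fun j => (hφP j).le
    set Dsc : ℕ → Fin m → WithLp 2 (EuclideanSpace ℝ (Fin n) × ℝ) :=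
      fun j i => (M (φ j))⁻¹ • B (φ j) i with hDdef
    have hDnorm : ∀ j i, ‖Dsc j i‖ = (M (φ j))⁻¹ * ‖B (φ j) i‖ := by
      intro j i
      rw [hDdef]
      rw [norm_smul, Real.norm_eq_abs, abs_of_pos (inv_pos.mpr (hMpos j))]
    have hDle1 : ∀ j i, ‖Dsc j i‖ ≤ 1 := by
      intro j i
      rw [hDnorm, inv_mul_le_iff₀ (hMpos j), mul_one]
      exact hBleM (φ j) i
    have hDball : ∀ j, Dsc j ∈ Metric.closedBall
        (0 : Fin m → WithLp 2 (EuclideanSpace ℝ (Fin n) × ℝ)) 1 := by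
      intro j
      rw [Metric.mem_closedBall, dist_zero_right]
      rw [pi_norm_le_iff_of_nonneg zero_le_one]
      exact hDle1 j
    obtain ⟨Dlim, hDmem, ψ, hψmono, hDconv⟩ :=
      (isCompact_closedBall (0 : Fin m → WithLp 2 (EuclideanSpace ℝ (Fin n) × ℝ)) 1).tendsto_subseq
        hDball
    have hDconv_i : ∀ i, Tendsto (fun t => Dsc (ψ t) i) atTop (𝓝 (Dlim i)) := fun i =>
      ((continuous_apply i).tendsto Dlim).comp hDconv
    have hDfst : ∀ i, Tendsto (fun t => (Dsc (ψ t) i).fst) atTop (𝓝 ((Dlim i).fst)) :=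
      fun i => (contW_fst.tendsto (Dlim i)).comp (hDconv_i i)
    have hDsnd : ∀ i, Tendsto (fun t => (Dsc (ψ t) i).snd) atTop (𝓝 ((Dlim i).snd)) :=
      fun i => (contW_snd.tendsto (Dlim i)).comp (hDconv_i i)
    have hDsndval : ∀ j i, (Dsc j i).snd = (M (φ j))⁻¹ * τv (φ j) i := fun j i => rfl
    have hDfstval : ∀ j i, (Dsc j i).fst = (M (φ j))⁻¹ • av (φ j) i := fun j i => rfl
    -- second components go to zero
    have hsnd0 : ∀ i, Tendsto (fun t => (Dsc (ψ t) i).snd) atTop (𝓝 0) := by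
      intro i
      have hsq : Tendsto (fun t : ℕ => (Cτ + 1) * (1 / ((ψ t : ℝ) + 1))) atTop (𝓝 0) := by
        simpa only [mul_zero, Function.comp_def] using (tendsto_one_div_k.const_mul (Cτ + 1)).comp hψmono.tendsto_atTop
      apply squeeze_zero_norm (fun t => ?_) hsq
      rw [hDsndval, Real.norm_eq_abs, abs_mul, abs_of_pos (inv_pos.mpr (hMpos (ψ t)))]
      have h1 : (M (φ (ψ t)))⁻¹ ≤ 1 / ((ψ t : ℝ) + 1) := by
        rw [one_div]
        exact inv_anti₀ (by positivity) (hMlow (ψ t))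
      have h2 := hτbound (φ (ψ t)) i
      have h3 : (0:ℝ) ≤ |τv (φ (ψ t)) i| := abs_nonneg _
      calc (M (φ (ψ t)))⁻¹ * |τv (φ (ψ t)) i| ≤ (1 / ((ψ t:ℝ) + 1)) * (Cτ + 1) := by
            apply mul_le_mul h1 h2 h3 (by positivity)
        _ = (Cτ + 1) * (1 / ((ψ t:ℝ) + 1)) := by ring
    have hDlimsnd : ∀ i, (Dlim i).snd = 0 := fun i =>
      tendsto_nhds_unique (hDsnd i) (hsnd0 i)
    -- the limits are singular subgradients at infinity
    set ubar : Fin m → EuclideanSpace ℝ (Fin n) := fun i => (Dlim i).fst with hubardef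
    have hφψ : Tendsto (fun t => φ (ψ t)) atTop atTop :=
      hφmono.tendsto_atTop.comp hψmono.tendsto_atTop
    have hubar_mem : ∀ i, ubar i ∈ singSubInfty (f i) := by
      intro i
      show (ubar i, (0:ℝ)) ∈ NclAtInfty (f i)
      apply mem_NclAtInfty_of_frechet
        (xs := fun t => xv (φ (ψ t)) i)
        (vs := fun t => (M (φ (ψ t)))⁻¹ • B (φ (ψ t)) i)
      · exact fun t => (hgraph (φ (ψ t)) i).1
      · apply tendsto_atTop_mono (fun t => hxlow (φ (ψ t)) i)
        exact (tendsto_atTop_add_const_right _ (-1:ℝ) (hPnorm.comp hφψ))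
      · intro t
        exact frechet_smul (inv_pos.mpr (hMpos (ψ t))) ((hgraph (φ (ψ t)) i).2)
      · exact hDfst i
      · exact hsnd0 i
    -- the limits sum to zero
    have hsumzero : ∑ i, ubar i = 0 := by
      have hlim1 : Tendsto (fun t => ∑ i, (Dsc (ψ t) i).fst) atTop (𝓝 (∑ i, ubar i)) :=
        tendsto_finset_sum _ fun i _ => hDfst i
      have hlim2 : Tendsto (fun t => ∑ i, (Dsc (ψ t) i).fst) atTop (𝓝 0) := by
        have hsq : Tendsto (fun t : ℕ => (Ca + 1) * (1 / ((ψ t : ℝ) + 1))) atTop (𝓝 0) := by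
          simpa only [mul_zero, Function.comp_def] using (tendsto_one_div_k.const_mul (Ca + 1)).comp hψmono.tendsto_atTop
        apply squeeze_zero_norm (fun t => ?_) hsq
        have h0 : ∑ i, (Dsc (ψ t) i).fst = (M (φ (ψ t)))⁻¹ • (∑ i, av (φ (ψ t)) i) := by
          rw [Finset.smul_sum]
          exact Finset.sum_congr rfl fun i _ => hDfstval (ψ t) i
        rw [h0, norm_smul, Real.norm_eq_abs, abs_of_pos (inv_pos.mpr (hMpos (ψ t)))]
        have h1 : (M (φ (ψ t)))⁻¹ ≤ 1 / ((ψ t : ℝ) + 1) := by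
          rw [one_div]
          exact inv_anti₀ (by positivity) (hMlow (ψ t))
        have h2 := habound (φ (ψ t))
        have h3 : (0:ℝ) ≤ Ca + 1 := le_trans (norm_nonneg _) h2
        calc (M (φ (ψ t)))⁻¹ * ‖∑ i, av (φ (ψ t)) i‖ ≤ (1 / ((ψ t:ℝ)+1)) * (Ca + 1) := by
              apply mul_le_mul h1 h2 (norm_nonneg _) (by positivity)
          _ = (Ca + 1) * (1 / ((ψ t:ℝ) + 1)) := by ring
      exact tendsto_nhds_unique hlim1 hlim2
    have hzero : ∀ i, ubar i = 0 := hQC ubar hubar_mem hsumzero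
    -- contradiction with total mass one
    have hDlimzero : ∀ i, Dlim i = 0 := by
      intro i
      have h1 : Dlim i = mkP ((Dlim i).fst) ((Dlim i).snd) := (mkP_eta _).symm
      rw [h1, hDlimsnd i]
      have h2 : (Dlim i).fst = 0 := hzero i
      rw [h2]
      rfl
    have hmass : ∀ j, ∑ i, ‖Dsc j i‖ = 1 := by
      intro j
      rw [Finset.sum_congr rfl fun i _ => hDnorm j i, ← Finset.mul_sum]
      have h2 : ∑ i, ‖B (φ j) i‖ = M (φ j) := rfl
      rw [h2]
      exact inv_mul_cancel₀ (ne_of_gt (hMpos j))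
    have hlimmass : Tendsto (fun t => ∑ i, ‖Dsc (ψ t) i‖) atTop (𝓝 (∑ i, ‖Dlim i‖)) :=
      tendsto_finset_sum _ fun i _ => (hDconv_i i).norm
    have hone : (∑ i, ‖Dlim i‖) = 1 := by
      have hconst : (fun t => ∑ i, ‖Dsc (ψ t) i‖) = fun _ => (1:ℝ) :=
        funext fun t => hmass (ψ t)
      rw [hconst] at hlimmass
      exact tendsto_nhds_unique hlimmass tendsto_const_nhds
    have hzero' : (∑ i, ‖Dlim i‖) = 0 := by
      rw [Finset.sum_eq_zero]
      intro i _
      rw [hDlimzero i, norm_zero]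
    rw [hzero'] at hone
    norm_num at hone
  -- final extraction along the bounded sequence
  obtain ⟨R, hR⟩ := hMbdd
  have hRnn : 0 ≤ R := le_trans (hMnonneg 0) (hR 0)
  have hBball : ∀ k, B k ∈ Metric.closedBall
      (0 : Fin m → WithLp 2 (EuclideanSpace ℝ (Fin n) × ℝ)) R := by
    intro k
    rw [Metric.mem_closedBall, dist_zero_right, pi_norm_le_iff_of_nonneg hRnn]
    exact fun i => le_trans (hBleM k i) (hR k)
  obtain ⟨L, hLmem, ψ, hψmono, hBconv⟩ := (isCompact_closedBall _ R).tendsto_subseq hBball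
  have hBconv_i : ∀ i, Tendsto (fun t => B (ψ t) i) atTop (𝓝 (L i)) := fun i =>
    ((continuous_apply i).tendsto L).comp hBconv
  have hLfst : ∀ i, Tendsto (fun t => (B (ψ t) i).fst) atTop (𝓝 ((L i).fst)) := fun i =>
    (contW_fst.tendsto (L i)).comp (hBconv_i i)
  have hLsnd : ∀ i, Tendsto (fun t => (B (ψ t) i).snd) atTop (𝓝 ((L i).snd)) := fun i =>
    (contW_snd.tendsto (L i)).comp (hBconv_i i)
  have hτs : ∀ i, Tendsto (fun k => τv k i) atTop (𝓝 s) := by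
    intro i
    have hdiff : Tendsto (fun k => τv k i - (V k).snd) atTop (𝓝 0) := by
      apply squeeze_zero_norm (fun k => ?_) hδ0
      rw [Real.norm_eq_abs]
      exact hτclose k i
    have h2 := hdiff.add hVsnd
    simpa using h2
  have hLsndval : ∀ i, (L i).snd = s := by
    intro i
    have h1 : Tendsto (fun t => τv (ψ t) i) atTop (𝓝 s) := (hτs i).comp hψmono.tendsto_atTop
    have h2 : Tendsto (fun t => (B (ψ t) i).snd) atTop (𝓝 s) := h1
    exact tendsto_nhds_unique (hLsnd i) h2
  refine ⟨fun i => (L i).fst, fun i => ?_, ?_⟩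
  · apply mem_NclAtInfty_of_frechet (xs := fun t => xv (ψ t) i) (vs := fun t => B (ψ t) i)
    · exact fun t => (hgraph (ψ t) i).1
    · apply tendsto_atTop_mono (fun t => hxlow (ψ t) i)
      exact tendsto_atTop_add_const_right _ (-1:ℝ) (hPnorm.comp hψmono.tendsto_atTop)
    · exact fun t => (hgraph (ψ t) i).2
    · exact hLfst i
    · have h1 := hLsnd i
      rw [hLsndval i] at h1
      exact h1
  · have hlim1 : Tendsto (fun t => ∑ i, (B (ψ t) i).fst) atTop (𝓝 (∑ i, (L i).fst)) :=
      tendsto_finset_sum _ fun i _ => hLfst i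
    have hlim2 : Tendsto (fun k => ∑ i, av k i) atTop (𝓝 u) := by
      have hdiff : Tendsto (fun k => (∑ i, av k i) - (V k).fst) atTop (𝓝 0) :=
        squeeze_zero_norm (fun k => haclose k) hδ0
      have h2 := hdiff.add hVfst
      simpa using h2
    have hlim2' : Tendsto (fun t => ∑ i, av (ψ t) i) atTop (𝓝 u) :=
      hlim2.comp hψmono.tendsto_atTop
    have heq : (fun t => ∑ i, (B (ψ t) i).fst) = fun t => ∑ i, av (ψ t) i := rfl
    rw [heq] at hlim1
    exact tendsto_nhds_unique hlim1 hlim2'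




end SumRuleAux
end

/-- Proposition 2.13: sum rules for the limiting and singular
subdifferentials at infinity. -/
theorem sum_rule_at_infinity {n m : ℕ} (hm : 2 ≤ m)
    (f : Fin m → EuclideanSpace ℝ (Fin n) → EReal)
    (hlsc : ∀ i, LowerSemicontinuous (f i)) (hbot : ∀ i x, f i x ≠ ⊥)
    (hdom : ∀ i, ¬ Bornology.IsBounded {x | f i x ≠ ⊤})
    (hdomsum : ¬ Bornology.IsBounded {x | (∑ i, f i x) ≠ ⊤})
    (hQC : ∀ u : Fin m → EuclideanSpace ℝ (Fin n),
      (∀ i, u i ∈ singSubInfty (f i)) → (∑ i, u i) = 0 → ∀ i, u i = 0) :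
    subInfty (fun x => ∑ i, f i x) ⊆ ∑ i, subInfty (f i) ∧
    singSubInfty (fun x => ∑ i, f i x) ⊆ ∑ i, singSubInfty (f i) := by
  constructor
  · intro u hu
    have hu' : (u, (-1:ℝ)) ∈ NclAtInfty (fun x => ∑ i, f i x) := hu
    obtain ⟨g, hg, hsum⟩ := SumRuleAux.main_decomp hm f hlsc hbot hQC hu'
    rw [Set.mem_fintype_sum]
    exact ⟨g, fun i => hg i, hsum⟩
  · intro u hu
    have hu' : (u, (0:ℝ)) ∈ NclAtInfty (fun x => ∑ i, f i x) := hu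
    obtain ⟨g, hg, hsum⟩ := SumRuleAux.main_decomp hm f hlsc hbot hQC hu'
    rw [Set.mem_fintype_sum]
    exact ⟨g, fun i => hg i, hsum⟩
end

section
/- Let f_1, …, f_m : ℝⁿ → ℝ ∪ {+∞} (m ≥ 2) be lower semicontinuous functions, each with unbounded domain and with dom(max{f_1,…,f_m}) unbounded, satisfying the qualification condition: whenever u_1 + … + u_m = 0 with u_i ∈ ∂^∞f_i(∞) for each i, one has u_1 = … = u_m = 0. Then ∂(max{f_1, …, f_m})(∞) ⊆ ⋃ {λ_1∘∂f_1(∞) + … + λ_m∘∂f_m(∞) : λ ∈ ℝ^m, λ_i ≥ 0, λ_1 + … + λ_m = 1} and ∂^∞(max{f_1, …, f_m})(∞) ⊆ ∂^∞f_1(∞) + … + ∂^∞f_m(∞). -/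
open Filter Topology Set Pointwise RealInnerProductSpace

set_option linter.unusedSectionVars false

noncomputable section

variable {E : Type*} [NormedAddCommGroup E] [InnerProductSpace ℝ E]

lemma frechet_zero_mem {Ω : Set E} {x : E} (hx : x ∈ Ω) : (0:E) ∈ FrechetNormalCone Ω x :=
  ⟨hx, fun ε hε => Eventually.of_forall fun y => by
    simp [inner_zero_left]; positivity⟩

lemma frechet_smul {Ω : Set E} {x v : E} {c : ℝ} (hc : 0 < c)
    (hv : v ∈ FrechetNormalCone Ω x) : c • v ∈ FrechetNormalCone Ω x := by
  refine ⟨hv.1, fun ε hε => ?_⟩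
  filter_upwards [hv.2 (ε / c) (by positivity)] with y hy
  rw [real_inner_smul_left]
  calc c * ⟪v, y - x⟫ ≤ c * (ε / c * ‖y - x‖) := by
        exact mul_le_mul_of_nonneg_left hy hc.le
    _ = ε * ‖y - x‖ := by field_simp
lemma frechet_of_quad {Ω : Set E} {x : E} (hx : x ∈ Ω) (c : E) (C ρ : ℝ) (hC : 0 ≤ C)
    (hρ : 0 < ρ) (h : ∀ y ∈ Ω, ‖y - x‖ < ρ → ⟪c, y - x⟫ ≤ C * ‖y - x‖ ^ 2) :
    c ∈ FrechetNormalCone Ω x := by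
  refine ⟨hx, fun ε hε => ?_⟩
  rw [eventually_nhdsWithin_iff]
  have hmem : Metric.ball x (min ρ (ε / (C + 1))) ∈ 𝓝 x :=
    Metric.ball_mem_nhds x (lt_min hρ (by positivity))
  filter_upwards [hmem] with y hy hyΩ
  rw [Metric.mem_ball, dist_eq_norm] at hy
  have h1 : ‖y - x‖ < ρ := lt_of_lt_of_le hy (min_le_left _ _)
  have h2 : ‖y - x‖ < ε / (C + 1) := lt_of_lt_of_le hy (min_le_right _ _)
  have h3 := h y hyΩ h1
  have h4 : C * ‖y - x‖ ≤ ε := by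
    rcases le_or_gt (‖y-x‖) 0 with h5 | h5
    · have : ‖y - x‖ = 0 := le_antisymm h5 (norm_nonneg _)
      rw [this]; simpa using hε.le
    · have h6 : (C+1) * ‖y - x‖ < ε := by
        rw [mul_comm]; exact (lt_div_iff₀ (by positivity)).mp h2
      nlinarith
  calc ⟪c, y - x⟫ ≤ C * ‖y - x‖ ^ 2 := h3
    _ = (C * ‖y - x‖) * ‖y - x‖ := by ring
    _ ≤ ε * ‖y - x‖ := mul_le_mul_of_nonneg_right h4 (norm_nonneg _)

-- basic structure lemmas
lemma mkP_fst (x : E) (t : ℝ) : (mkP x t).fst = x := rfl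
lemma mkP_snd (x : E) (t : ℝ) : (mkP x t).snd = t := rfl
lemma mkP_eta (p : WithLp 2 (E × ℝ)) : mkP p.fst p.snd = p := rfl
lemma mkP_add (x y : E) (s t : ℝ) : mkP x s + mkP y t = mkP (x+y) (s+t) := rfl
lemma mkP_sub (x y : E) (s t : ℝ) : mkP x s - mkP y t = mkP (x-y) (s-t) := rfl
lemma mem_epiSet {f : E → EReal} {p : WithLp 2 (E × ℝ)} :
    p ∈ epiSet f ↔ f p.fst ≤ (p.snd : EReal) := Iff.rfl

lemma norm_fst_le' (p : WithLp 2 (E × ℝ)) : ‖p.fst‖ ≤ ‖p‖ := by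
  rw [WithLp.prod_norm_eq_of_L2]
  calc ‖p.fst‖ = Real.sqrt (‖p.fst‖^2) := (Real.sqrt_sq (norm_nonneg _)).symm
    _ ≤ Real.sqrt (‖p.fst‖^2 + ‖p.snd‖^2) :=
        Real.sqrt_le_sqrt (by nlinarith [sq_nonneg ‖p.snd‖])

lemma norm_mkP_snd (c : ℝ) : ‖mkP (0:E) c‖ = |c| := by
  rw [WithLp.prod_norm_eq_of_L2]
  simp [mkP_fst, mkP_snd, Real.sqrt_sq_eq_abs]

lemma inner_mkP_snd (v : WithLp 2 (E × ℝ)) (c : ℝ) : ⟪v, mkP (0:E) c⟫ = v.snd * c := by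
  rw [WithLp.prod_inner_apply]
  simp [mkP_fst, mkP_snd, RCLike.inner_apply, conj_trivial]
  ring

lemma epiSet_closed {f : E → EReal} (hf : LowerSemicontinuous f) : IsClosed (epiSet f) := by
  have h1 : IsClosed {p : E × ℝ | f p.1 ≤ (p.2 : EReal)} := by
    rw [← isOpen_compl_iff]
    rw [isOpen_iff_mem_nhds]
    intro p hp
    rw [Set.mem_compl_iff, Set.mem_setOf_eq, not_le] at hp
    obtain ⟨y, hy1, hy2⟩ := exists_between hp
    have hyt : y ≠ ⊤ := ne_top_of_lt hy2
    have hyb : y ≠ ⊥ := ne_bot_of_gt hy1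
    set yr : ℝ := y.toReal with hyr
    have hyy : (yr : EReal) = y := EReal.coe_toReal hyt hyb
    have h2 : ∀ᶠ q : E × ℝ in 𝓝 p, y < f q.1 := by
      have := hf p.1 y hy2
      exact (continuous_fst.tendsto p).eventually this
    have h3 : ∀ᶠ q : E × ℝ in 𝓝 p, q.2 < yr := by
      have hpy : p.2 < yr := by
        rw [← EReal.coe_lt_coe_iff]; rw [hyy]; exact hy1
      have : Continuous fun q : E × ℝ => q.2 := continuous_snd
      exact this.tendsto p |>.eventually (eventually_lt_nhds hpy)
    filter_upwards [h2, h3] with q h2 h3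
    rw [Set.mem_compl_iff, Set.mem_setOf_eq, not_le]
    calc (q.2 : EReal) < (yr : EReal) := by exact_mod_cast h3
      _ = y := hyy
      _ < f q.1 := h2
  have : epiSet f = (WithLp.prodContinuousLinearEquiv 2 ℝ E ℝ) ⁻¹' {p : E × ℝ | f p.1 ≤ (p.2 : EReal)} := rfl
  rw [this]
  exact h1.preimage (WithLp.prodContinuousLinearEquiv 2 ℝ E ℝ).continuous

lemma frechet_epi_snd_nonpos {f : E → EReal} {p v : WithLp 2 (E × ℝ)}
    (hv : v ∈ FrechetNormalCone (epiSet f) p) : v.snd ≤ 0 := by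
  obtain ⟨hp, hfre⟩ := hv
  by_contra hpos
  push_neg at hpos
  have hε : (0:ℝ) < v.snd / 2 := by linarith
  have hev := hfre (v.snd / 2) hε
  -- the vertical sequence
  have hseq : Tendsto (fun j : ℕ => p + mkP (0:E) (1/((j:ℝ)+1))) atTop (𝓝[epiSet f] p) := by
    apply tendsto_nhdsWithin_of_tendsto_nhds_of_eventually_within
    · have h0 : Tendsto (fun j : ℕ => (1:ℝ)/((j:ℝ)+1)) atTop (𝓝 0) :=
        tendsto_one_div_add_atTop_nhds_zero_nat
      have : Tendsto (fun j : ℕ => mkP (0:E) (1/((j:ℝ)+1))) atTop (𝓝 (mkP (0:E) 0)) := by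
        apply Tendsto.comp (g := fun c : ℝ => mkP (0:E) c) _ h0
        have hc : Continuous (fun c : ℝ => mkP (0:E) c) := by
          apply (WithLp.prodContinuousLinearEquiv 2 ℝ E ℝ).symm.continuous.comp
          exact continuous_const.prodMk continuous_id
        exact hc.tendsto 0
      have h2 := tendsto_const_nhds (x := p) (f := atTop (α := ℕ)) |>.add this
      have h5 : p + mkP (0:E) (0:ℝ) = p := add_zero p
      rwa [h5] at h2
    · apply Eventually.of_forall
      intro j
      rw [mem_epiSet]
      have h3 : (p + mkP (0:E) (1/((j:ℝ)+1))).fst = p.fst := by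
        show p.fst + 0 = p.fst; simp
      have h4 : (p + mkP (0:E) (1/((j:ℝ)+1))).snd = p.snd + 1/((j:ℝ)+1) := rfl
      rw [h3, h4]
      calc f p.fst ≤ (p.snd : EReal) := hp
        _ ≤ ((p.snd + 1/((j:ℝ)+1) : ℝ) : EReal) := by
            rw [EReal.coe_le_coe_iff]
            have : (0:ℝ) < 1/((j:ℝ)+1) := by positivity
            linarith
  have hev2 := (hseq.eventually hev).exists
  obtain ⟨j, hj⟩ := hev2
  have h5 : p + mkP (0:E) (1/((j:ℝ)+1)) - p = mkP (0:E) (1/((j:ℝ)+1)) := by abel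
  rw [h5, inner_mkP_snd, norm_mkP_snd] at hj
  have h6 : (0:ℝ) < 1/((j:ℝ)+1) := by positivity
  rw [abs_of_pos h6] at hj
  nlinarith

lemma frechet_epi_move_down {f : E → EReal} {x : E} {t : ℝ}
    (hfx : f x ≠ ⊤) (hfb : f x ≠ ⊥) {v : WithLp 2 (E × ℝ)}
    (hv : v ∈ FrechetNormalCone (epiSet f) (mkP x t)) :
    v ∈ FrechetNormalCone (epiSet f) (mkP x (f x).toReal) := by
  obtain ⟨hp, hfre⟩ := hv
  have hcoe : ((f x).toReal : EReal) = f x := EReal.coe_toReal hfx hfb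
  have hle : (f x).toReal ≤ t := by
    have := hp
    rw [mem_epiSet, mkP_fst, mkP_snd] at this
    rw [← EReal.coe_le_coe_iff, hcoe]
    exact this
  set c : ℝ := t - (f x).toReal with hcdef
  have hc : 0 ≤ c := by linarith
  constructor
  · rw [mem_epiSet, mkP_fst, mkP_snd, hcoe]
  · intro ε hε
    have hev := hfre ε hε
    set φ : WithLp 2 (E × ℝ) → WithLp 2 (E × ℝ) := fun z => z + mkP 0 c with hφdef
    have hφc : Continuous φ := continuous_id.add continuous_const
    have hmapsto : MapsTo φ (epiSet f) (epiSet f) := by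
      intro z hz
      rw [mem_epiSet] at hz ⊢
      have h3 : (φ z).fst = z.fst := by show z.fst + 0 = z.fst; simp
      have h4 : (φ z).snd = z.snd + c := rfl
      rw [h3, h4]
      calc f z.fst ≤ (z.snd : EReal) := hz
        _ ≤ ((z.snd + c : ℝ) : EReal) := by rw [EReal.coe_le_coe_iff]; linarith
    have hφpt : φ (mkP x (f x).toReal) = mkP x t := by
      show mkP x (f x).toReal + mkP 0 c = mkP x t
      rw [mkP_add]
      congr 1
      · simp
      · rw [hcdef]; ring
    have htend : Tendsto φ (𝓝[epiSet f] (mkP x (f x).toReal)) (𝓝[epiSet f] (mkP x t)) := by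
      have := hφc.continuousWithinAt (s := epiSet f) (x := mkP x (f x).toReal)
      have h2 := this.tendsto_nhdsWithin hmapsto
      rwa [hφpt] at h2
    have hev2 := htend.eventually hev
    filter_upwards [hev2] with z hz
    have h7 : φ z - mkP x t = z - mkP x (f x).toReal := by
      have hsplit : mkP x t = mkP x (f x).toReal + mkP (0:E) c := by
        rw [mkP_add]
        congr 1
        · simp
        · rw [hcdef]; ring
      show z + mkP 0 c - mkP x t = z - mkP x (f x).toReal
      rw [hsplit]
      abel
    rwa [h7] at hz

lemma frechet_mem_limiting {Ω : Set (WithLp 2 (E × ℝ))} {x v : WithLp 2 (E × ℝ)}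
    (hv : v ∈ FrechetNormalCone Ω x) : v ∈ LimitingNormalCone Ω x :=
  ⟨fun _ => x, fun _ => v, fun _ => hv, tendsto_const_nhds, tendsto_const_nhds⟩

set_option maxHeartbeats 2000000 in
lemma fuzzy {Y : Type*} [NormedAddCommGroup Y] [InnerProductSpace ℝ Y] [FiniteDimensional ℝ Y] {m : ℕ} (hm : 0 < m) (Ω : Fin m → Set Y)
    (hcl : ∀ i, IsClosed (Ω i)) {q v : Y}
    (hv : v ∈ FrechetNormalCone (⋂ i, Ω i) q) {ε : ℝ} (hε : 0 < ε) :
    ∃ y μ : Fin m → Y, (∀ i, ‖y i - q‖ ≤ ε) ∧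
      (∀ i, μ i ∈ FrechetNormalCone (Ω i) (y i)) ∧ ‖(∑ i, μ i) - v‖ ≤ ε := by
  obtain ⟨hqΩ, hfre⟩ := hv
  have hqi : ∀ i, q ∈ Ω i := fun i => by
    have := hqΩ; rw [Set.mem_iInter] at this; exact this i
  set τ : ℝ := ε / 4 with hτdef
  have hτ : 0 < τ := by positivity
  -- radius where the Fréchet inequality holds
  have hev := hfre τ hτ
  rw [eventually_nhdsWithin_iff, Metric.eventually_nhds_iff] at hev
  obtain ⟨r, hr, hball⟩ := hev
  have hballn : ∀ z ∈ ⋂ i, Ω i, ‖z - q‖ < r → ⟪v, z - q⟫ ≤ τ * ‖z - q‖ := by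
    intro z hz hzr
    exact hball (by rwa [dist_eq_norm]) hz
  have hr0 : r ≠ 0 := ne_of_gt hr
  set K : ℝ := 1 + 2 * ‖v‖ / r + 2 * τ / r with hKdef
  have hK1 : (1:ℝ) ≤ K := by
    have : 0 ≤ 2 * ‖v‖ / r := by positivity
    have h2 : 0 ≤ 2 * τ / r := by positivity
    simp only [hKdef]; linarith
  have hK : 0 < K := lt_of_lt_of_le one_pos hK1
  have hKv : ‖v‖ < K * (r / 2) := by
    have : K * (r/2) = r/2 + ‖v‖ + τ := by rw [hKdef]; field_simp
    rw [this]; linarith [hτ, hr]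
  have hKτ : τ < K * (r / 2) := by
    have : K * (r/2) = r/2 + ‖v‖ + τ := by rw [hKdef]; field_simp
    rw [this]; linarith [hr, norm_nonneg v]
  set i0 : Fin m := ⟨0, hm⟩ with hi0
  -- the compact constraint set
  set S : Fin m → Set Y := fun i => Ω i ∩ Metric.closedBall q r with hSdef
  set T : Set (Fin m → Y) := Set.univ.pi S with hTdef
  have hTc : IsCompact T :=
    isCompact_univ_pi fun i => (isCompact_closedBall q r).inter_left (hcl i)
  have hqT : (fun _ => q) ∈ T := by
    intro i _; exact ⟨hqi i, Metric.mem_closedBall_self hr.le⟩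
  have hTne : T.Nonempty := ⟨_, hqT⟩
  -- the penalized objective
  set Φ : ℕ → (Fin m → Y) → ℝ := fun k y =>
    ⟪v, y i0 - q⟫ - K * ‖y i0 - q‖ ^ 2
      - ((k:ℝ)+1) * ∑ i ∈ Finset.univ.erase i0, ‖y i - y i0‖ ^ 2 with hΦdef
  have hΦc : ∀ k, Continuous (Φ k) := by
    intro k
    apply Continuous.sub
    apply Continuous.sub
    · exact (continuous_const.inner ((continuous_apply i0).sub continuous_const))
    · exact continuous_const.mul
        (((continuous_apply i0).sub continuous_const).norm.pow 2)
    · exact continuous_const.mul <| continuous_finset_sum _ fun i _ =>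
        (((continuous_apply i).sub (continuous_apply i0)).norm.pow 2)
  -- maximizers
  have hmaxex : ∀ k : ℕ, ∃ Y0 ∈ T, ∀ z ∈ T, Φ k z ≤ Φ k Y0 := by
    intro k
    obtain ⟨Y0, hY0T, hY0⟩ := hTc.exists_isMaxOn hTne ((hΦc k).continuousOn)
    exact ⟨Y0, hY0T, fun z hz => hY0 hz⟩
  choose Ys hYsT hYsMax using hmaxex
  have hΦq : ∀ k, Φ k (fun _ => q) = 0 := by
    intro k; simp [hΦdef]
  have hP1 : ∀ k, K * ‖Ys k i0 - q‖ ^ 2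
      + ((k:ℝ)+1) * ∑ i ∈ Finset.univ.erase i0, ‖Ys k i - Ys k i0‖ ^ 2
      ≤ ⟪v, Ys k i0 - q⟫ := by
    intro k
    have h0 := hYsMax k _ hqT
    rw [hΦq k] at h0
    simp only [hΦdef] at h0
    linarith
  have hsumnn : ∀ k, 0 ≤ ∑ i ∈ Finset.univ.erase i0, ‖Ys k i - Ys k i0‖ ^ 2 :=
    fun k => Finset.sum_nonneg fun i _ => sq_nonneg _
  have hk1nn : ∀ k : ℕ, (0:ℝ) ≤ (k:ℝ)+1 := fun k => by positivity
  have hKd : ∀ k, K * ‖Ys k i0 - q‖ ≤ ‖v‖ := by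
    intro k
    rcases (eq_or_lt_of_le (norm_nonneg (Ys k i0 - q))).imp Eq.symm id with h | h
    · rw [h, mul_zero]; exact norm_nonneg v
    · have hc := real_inner_le_norm v (Ys k i0 - q)
      nlinarith [hP1 k, mul_nonneg (hk1nn k) (hsumnn k)]
  have hKdd : ∀ k, ‖Ys k i0 - q‖ ≤ ‖v‖ / K := fun k =>
    (le_div_iff₀' hK).mpr (hKd k)
  have hcoupi : ∀ k, ∀ i ∈ Finset.univ.erase i0,
      ‖Ys k i - Ys k i0‖ ^ 2 ≤ (‖v‖ * (‖v‖ / K)) / ((k:ℝ)+1) := by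
    intro k i hi
    have h1 : ((k:ℝ)+1) * ∑ j ∈ Finset.univ.erase i0, ‖Ys k j - Ys k i0‖ ^ 2
        ≤ ‖v‖ * (‖v‖ / K) := by
      have hc := real_inner_le_norm v (Ys k i0 - q)
      have h2 := mul_le_mul_of_nonneg_left (hKdd k) (norm_nonneg v)
      nlinarith [hP1 k, sq_nonneg (‖Ys k i0 - q‖)]
    have h3 : ‖Ys k i - Ys k i0‖ ^ 2
        ≤ ∑ j ∈ Finset.univ.erase i0, ‖Ys k j - Ys k i0‖ ^ 2 :=
      Finset.single_le_sum (f := fun j => ‖Ys k j - Ys k i0‖ ^ 2) (fun j _ => sq_nonneg _) hi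
    rw [le_div_iff₀ (by positivity : (0:ℝ) < (k:ℝ)+1)]
    calc ‖Ys k i - Ys k i0‖ ^ 2 * ((k:ℝ)+1) = ((k:ℝ)+1) * ‖Ys k i - Ys k i0‖ ^ 2 := by ring
      _ ≤ ((k:ℝ)+1) * ∑ j ∈ Finset.univ.erase i0, ‖Ys k j - Ys k i0‖ ^ 2 :=
          mul_le_mul_of_nonneg_left h3 (hk1nn k)
      _ ≤ ‖v‖ * (‖v‖ / K) := h1
  -- convergent subsequence of maximizers
  obtain ⟨Yl, hYlT, φ, hφ, hYlim⟩ := hTc.tendsto_subseq hYsT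
  have hcoord : ∀ i, Tendsto (fun j => Ys (φ j) i) atTop (𝓝 (Yl i)) := by
    intro i
    exact (continuous_apply i).continuousAt.tendsto.comp hYlim
  have hφatTop : Tendsto (fun j => ((φ j : ℝ) + 1)) atTop atTop :=
    tendsto_atTop_add_const_right _ 1 (tendsto_natCast_atTop_atTop.comp hφ.tendsto_atTop)
  have hYleq : ∀ i, Yl i = Yl i0 := by
    intro i
    rcases eq_or_ne i i0 with h | hne
    · rw [h]
    have hmem : i ∈ Finset.univ.erase i0 := Finset.mem_erase.mpr ⟨hne, Finset.mem_univ i⟩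
    have h1 : Tendsto (fun j => ‖Ys (φ j) i - Ys (φ j) i0‖ ^ 2) atTop
        (𝓝 (‖Yl i - Yl i0‖ ^ 2)) := (((hcoord i).sub (hcoord i0)).norm.pow 2)
    have h3 : Tendsto (fun j => (‖v‖ * (‖v‖ / K)) / ((φ j : ℝ)+1)) atTop (𝓝 0) :=
      tendsto_const_nhds.div_atTop hφatTop
    have h4 : ‖Yl i - Yl i0‖ ^ 2 ≤ 0 :=
      le_of_tendsto_of_tendsto' h1 h3 (fun j => hcoupi (φ j) i hmem)
    have h5 : ‖Yl i - Yl i0‖ ^ 2 = 0 := le_antisymm h4 (sq_nonneg _)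
    have h6 : Yl i - Yl i0 = 0 := by
      simpa using (pow_eq_zero_iff (by norm_num : 2 ≠ 0)).mp h5
    exact sub_eq_zero.mp h6
  set yhat := Yl i0 with hyhatdef
  have hYlmem : ∀ i, Yl i ∈ Ω i ∩ Metric.closedBall q r := fun i => hYlT i (Set.mem_univ i)
  have hyhatΩ : yhat ∈ ⋂ i, Ω i := by
    rw [Set.mem_iInter]
    intro i
    have := (hYlmem i).1
    rwa [hYleq i] at this
  have hyK : K * ‖yhat - q‖ ≤ ‖v‖ := by
    have h1 : Tendsto (fun j => K * ‖Ys (φ j) i0 - q‖) atTop (𝓝 (K * ‖yhat - q‖)) :=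
      (((hcoord i0).sub tendsto_const_nhds).norm).const_mul K
    exact le_of_tendsto h1 (Eventually.of_forall fun j => hKd (φ j))
  have hyhalf : ‖yhat - q‖ < r / 2 := by
    have := lt_of_le_of_lt hyK hKv
    exact (mul_lt_mul_iff_right₀ hK).mp this
  have hfyhat : ⟪v, yhat - q⟫ ≤ τ * ‖yhat - q‖ :=
    hballn _ hyhatΩ (by linarith)
  have hKq : K * ‖yhat - q‖ ^ 2 ≤ ⟪v, yhat - q⟫ := by
    have h1 : Tendsto (fun j => K * ‖Ys (φ j) i0 - q‖ ^ 2) atTop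
        (𝓝 (K * ‖yhat - q‖ ^ 2)) :=
      ((((hcoord i0).sub tendsto_const_nhds).norm).pow 2).const_mul K
    have h2 : Tendsto (fun j => ⟪v, Ys (φ j) i0 - q⟫) atTop (𝓝 (⟪v, yhat - q⟫)) :=
      tendsto_const_nhds.inner ((hcoord i0).sub tendsto_const_nhds)
    refine le_of_tendsto_of_tendsto' h1 h2 fun j => ?_
    have := hP1 (φ j)
    nlinarith [mul_nonneg (hk1nn (φ j)) (hsumnn (φ j))]
  have hyτ : K * ‖yhat - q‖ ≤ τ := by
    rcases (eq_or_lt_of_le (norm_nonneg (yhat - q))).imp Eq.symm id with h | h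
    · rw [h, mul_zero]; exact hτ.le
    · nlinarith
  have hyτ' : ‖yhat - q‖ ≤ τ / K := (le_div_iff₀' hK).mpr hyτ
  have hτK2 : τ / K < r / 2 := by
    rw [div_lt_iff₀ hK]
    calc τ < K * (r/2) := hKτ
      _ = r/2 * K := by ring
  -- choose a good index
  set δ : ℝ := min (ε/(4*K)) (r/4) with hδdef
  have hδ : 0 < δ := lt_min (by positivity) (by positivity)
  obtain ⟨j, hj⟩ := (Metric.tendsto_nhds.mp hYlim δ hδ).exists
  set W : Fin m → Y := Ys (φ j) with hWdef
  have hWl : ∀ i, ‖W i - Yl i‖ < δ := by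
    intro i
    calc ‖W i - Yl i‖ = dist (W i) (Yl i) := (dist_eq_norm _ _).symm
      _ ≤ dist (Ys (φ j)) Yl := dist_le_pi_dist _ _ i
      _ < δ := hj
  have hWl' : ∀ i, ‖W i - yhat‖ < δ := by
    intro i; rw [← hYleq i]; exact hWl i
  have hWq : ∀ i, ‖W i - q‖ ≤ δ + τ / K := by
    intro i
    calc ‖W i - q‖ ≤ ‖W i - yhat‖ + ‖yhat - q‖ := norm_sub_le_norm_sub_add_norm_sub _ _ _
      _ ≤ δ + τ / K := add_le_add (hWl' i).le hyτ'
  have hWr : ∀ i, ‖W i - q‖ < r := by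
    intro i
    have h1 : δ ≤ r/4 := min_le_right _ _
    calc ‖W i - q‖ ≤ δ + τ/K := hWq i
      _ < r/4 + r/2 := by
          apply add_lt_add_of_le_of_lt h1 hτK2
      _ < r := by linarith
  have hWΩ : ∀ i, W i ∈ Ω i := fun i => (hYsT (φ j) i (Set.mem_univ i)).1
  set k : ℕ := φ j with hkdef
  -- the candidate normals
  set μp : Fin m → Y := fun i => (2*((k:ℝ)+1)) • (W i0 - W i) with hμpdef
  set μF : Fin m → Y := fun i => if i = i0 then
      v - (2*K) • (W i0 - q) - ∑ l ∈ Finset.univ.erase i0, μp l else μp i with hμdef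
  have hμsum : ∑ i, μF i = v - (2*K) • (W i0 - q) := by
    rw [← Finset.add_sum_erase _ μF (Finset.mem_univ i0)]
    have h1 : μF i0 = v - (2*K) • (W i0 - q) - ∑ l ∈ Finset.univ.erase i0, μp l := by
      simp [hμdef]
    have h2 : ∑ l ∈ Finset.univ.erase i0, μF l = ∑ l ∈ Finset.univ.erase i0, μp l := by
      apply Finset.sum_congr rfl
      intro l hl
      have := (Finset.mem_erase.mp hl).1
      simp [hμdef, this]
    rw [h1, h2]
    abel
  -- membership of updates in T
  have hupd : ∀ (i : Fin m) (z : Y), z ∈ Ω i → ‖z - W i‖ < r - ‖W i - q‖ →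
      Function.update W i z ∈ T := by
    intro i z hz hznear l _
    rcases eq_or_ne l i with rfl | hne
    · rw [Function.update_self]
      refine ⟨hz, ?_⟩
      rw [Metric.mem_closedBall, dist_eq_norm]
      calc ‖z - q‖ ≤ ‖z - W l‖ + ‖W l - q‖ := norm_sub_le_norm_sub_add_norm_sub _ _ _
        _ ≤ r := by linarith
    · rw [Function.update_of_ne hne]
      exact ⟨hWΩ l, Metric.mem_closedBall.mpr (by rw [dist_eq_norm]; exact (hWr l).le)⟩
  -- normal cone memberships
  have hμmem : ∀ i, μF i ∈ FrechetNormalCone (Ω i) (W i) := by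
    intro i
    rcases eq_or_ne i i0 with heq | hne
    · -- the distinguished slot
      rw [heq]
      have hμi : μF i0 = v - (2*K) • (W i0 - q) - ∑ l ∈ Finset.univ.erase i0, μp l := by
        simp [hμdef]
      refine frechet_of_quad (hWΩ i0) _ (K + ((k:ℝ)+1) * m) (r - ‖W i0 - q‖)
        (by positivity) (by linarith [hWr i0]) ?_
      intro z hz hznear
      have hT := hupd i0 z hz hznear
      have hcomp := hYsMax k _ hT
      simp only [hΦdef] at hcomp
      rw [Function.update_self] at hcomp
      have hsum_eq : ∀ l ∈ Finset.univ.erase i0,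
          Function.update W i0 z l = W l := by
        intro l hl
        exact Function.update_of_ne (Finset.mem_erase.mp hl).1 _ _
      rw [Finset.sum_congr rfl (fun l hl => by rw [hsum_eq l hl])] at hcomp
      set d : Y := z - W i0 with hddef
      have hvz : ⟪v, z - q⟫ = ⟪v, W i0 - q⟫ + ⟪v, d⟫ := by
        rw [← inner_add_right]; congr 1; rw [hddef]; abel
      have hzq : ‖z - q‖^2 = ‖W i0 - q‖^2 + 2*⟪W i0 - q, d⟫ + ‖d‖^2 := by
        have h9 : z - q = (W i0 - q) + d := by rw [hddef]; abel
        rw [h9, @norm_add_sq_real]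
      have hterm : ∀ l, ‖W l - z‖^2 = ‖W l - W i0‖^2 - 2*⟪W l - W i0, d⟫ + ‖d‖^2 := by
        intro l
        have h9 : W l - z = (W l - W i0) - d := by rw [hddef]; abel
        rw [h9, @norm_sub_sq_real]
      have hsumz : ∑ l ∈ Finset.univ.erase i0, ‖W l - z‖^2
          = ∑ l ∈ Finset.univ.erase i0, ‖W l - W i0‖^2
            - 2*∑ l ∈ Finset.univ.erase i0, ⟪W l - W i0, d⟫
            + ((Finset.univ.erase i0).card : ℝ) * ‖d‖^2 := by
        rw [Finset.sum_congr rfl (fun l _ => hterm l)]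
        rw [Finset.sum_add_distrib, Finset.sum_sub_distrib, Finset.sum_const,
          Finset.mul_sum, nsmul_eq_mul]
        try ring
      have hμinner : ⟪μF i0, d⟫ = ⟪v, d⟫ - 2*K*⟪W i0 - q, d⟫
          + 2*((k:ℝ)+1) * ∑ l ∈ Finset.univ.erase i0, ⟪W l - W i0, d⟫ := by
        rw [hμi, inner_sub_left, inner_sub_left, real_inner_smul_left, sum_inner]
        have h9 : ∀ l ∈ Finset.univ.erase i0, ⟪μp l, d⟫ = -(2*((k:ℝ)+1) * ⟪W l - W i0, d⟫) := by
          intro l _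
          rw [hμpdef]
          simp only
          rw [real_inner_smul_left]
          have h8 : W i0 - W l = -(W l - W i0) := by abel
          rw [h8, inner_neg_left]
          ring
        rw [Finset.sum_congr rfl h9, Finset.sum_neg_distrib, ← Finset.mul_sum]
        ring
      have hcard : ((Finset.univ.erase i0).card : ℝ) ≤ (m:ℝ) := by
        have h9 := Finset.card_erase_le (s := (Finset.univ : Finset (Fin m))) (a := i0)
        have h8 : (Finset.univ : Finset (Fin m)).card = m := by simp
        exact_mod_cast le_trans h9 (le_of_eq h8)
      have hdnn : (0:ℝ) ≤ ‖d‖^2 := sq_nonneg _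
      rw [hμinner]
      rw [hvz, hzq, hsumz] at hcomp
      nlinarith [mul_le_mul_of_nonneg_left hcard (mul_nonneg (hk1nn k) hdnn)]
    · -- other slots
      have hμi : μF i = μp i := by simp [hμdef, hne]
      have hmemi : i ∈ Finset.univ.erase i0 := Finset.mem_erase.mpr ⟨hne, Finset.mem_univ i⟩
      refine frechet_of_quad (hWΩ i) _ ((k:ℝ)+1) (r - ‖W i - q‖)
        (hk1nn k) (by linarith [hWr i]) ?_
      intro z hz hznear
      have hT := hupd i z hz hznear
      have hcomp := hYsMax k _ hT
      simp only [hΦdef] at hcomp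
      rw [Function.update_of_ne (Ne.symm hne) _ _] at hcomp
      -- sum splitting
      have hBsum : ∑ l ∈ Finset.univ.erase i0, ‖Function.update W i z l - W i0‖^2
          = ‖z - W i0‖^2 + ∑ l ∈ (Finset.univ.erase i0).erase i, ‖W l - W i0‖^2 := by
        rw [← Finset.add_sum_erase _ _ hmemi]
        congr 1
        · rw [Function.update_self]
        · apply Finset.sum_congr rfl
          intro l hl
          rw [Function.update_of_ne (Finset.mem_erase.mp hl).1]
      have hAsum : ∑ l ∈ Finset.univ.erase i0, ‖W l - W i0‖^2
          = ‖W i - W i0‖^2 + ∑ l ∈ (Finset.univ.erase i0).erase i, ‖W l - W i0‖^2 :=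
        (Finset.add_sum_erase _ _ hmemi).symm
      rw [hBsum, hAsum] at hcomp
      have hA : ‖W i - W i0‖^2 ≤ ‖z - W i0‖^2 := by
        have hk1pos : (0:ℝ) < (k:ℝ)+1 := by positivity
        nlinarith
      have hid : ‖z - W i0‖^2 = ‖z - W i‖^2 - 2*⟪z - W i, W i0 - W i⟫ + ‖W i0 - W i‖^2 := by
        have : z - W i0 = (z - W i) - (W i0 - W i) := by abel
        rw [this, @norm_sub_sq_real]
      rw [hμi]
      have : ⟪μp i, z - W i⟫ = 2*((k:ℝ)+1) * ⟪W i0 - W i, z - W i⟫ := by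
        rw [hμpdef]; simp only; rw [real_inner_smul_left]
      rw [this]
      have hcm : ⟪z - W i, W i0 - W i⟫ = ⟪W i0 - W i, z - W i⟫ := real_inner_comm _ _
      have hrev : ‖W i - W i0‖ = ‖W i0 - W i‖ := norm_sub_rev _ _
      rw [hrev] at hA
      nlinarith [mul_nonneg (hk1nn k) (by nlinarith : (0:ℝ) ≤ ‖z - W i‖^2 - 2*⟪W i0 - W i, z - W i⟫)]
  -- final bounds
  have hKfrac : ‖v - (2*K) • (W i0 - q) - v‖ ≤ ε := by
    have h1 : v - (2*K) • (W i0 - q) - v = -((2*K) • (W i0 - q)) := by abel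
    rw [h1, norm_neg, norm_smul, Real.norm_eq_abs, abs_of_pos (by positivity : (0:ℝ) < 2*K)]
    have h2 : ‖W i0 - q‖ ≤ δ + τ/K := hWq i0
    have h3 : δ ≤ ε/(4*K) := min_le_left _ _
    have h4 : 2*K*δ ≤ ε/2 := by
      calc 2*K*δ ≤ 2*K*(ε/(4*K)) := by
            apply mul_le_mul_of_nonneg_left h3 (by positivity)
        _ = ε/2 := by field_simp; ring
    have h5 : 2*K*(τ/K) = ε/2 := by rw [hτdef]; field_simp; ring
    calc 2*K*‖W i0 - q‖ ≤ 2*K*(δ + τ/K) := by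
          apply mul_le_mul_of_nonneg_left h2 (by positivity)
      _ = 2*K*δ + 2*K*(τ/K) := by ring
      _ ≤ ε/2 + ε/2 := by rw [h5]; linarith
      _ = ε := by ring
  refine ⟨W, μF, ?_, hμmem, by rw [hμsum]; exact hKfrac⟩
  intro i
  have h2 : ‖W i - q‖ ≤ δ + τ/K := hWq i
  have h3 : δ ≤ ε/(4*K) := min_le_left _ _
  have h4 : ε/(4*K) ≤ ε/4 := by
    apply div_le_div_of_nonneg_left hε.le (by positivity)
    linarith
  have h5 : τ/K ≤ τ := by
    rw [div_le_iff₀ hK]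
    nlinarith
  calc ‖W i - q‖ ≤ δ + τ/K := h2
    _ ≤ ε/4 + ε/4 := by
        rw [hτdef] at h5 ⊢
        linarith
    _ ≤ ε := by linarith


lemma limiting_smul {Ω : Set E} {x v : E} {c : ℝ} (hc : 0 < c)
    (hv : v ∈ LimitingNormalCone Ω x) : c • v ∈ LimitingNormalCone Ω x := by
  obtain ⟨xs, vs, hfre, hx, hvt⟩ := hv
  exact ⟨xs, fun k => c • vs k, fun k => frechet_smul hc (hfre k), hx,
    hvt.const_smul c⟩

lemma ncl_smul {f : E → EReal} {p : E × ℝ} {c : ℝ} (hc : 0 < c)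
    (hp : p ∈ NclAtInfty f) : (c • p.1, c * p.2) ∈ NclAtInfty f := by
  obtain ⟨xs, ws, htop, hnorm, hmem, hlim⟩ := hp
  refine ⟨xs, fun k => c • ws k, htop, hnorm,
    fun k => limiting_smul hc (hmem k), ?_⟩
  have h1 : Tendsto (fun k => c • WithLp.equiv 2 (E × ℝ) (ws k)) atTop (𝓝 (c • p)) :=
    hlim.const_smul c
  have h2 : (fun k => c • WithLp.equiv 2 (E × ℝ) (ws k))
      = fun k => WithLp.equiv 2 (E × ℝ) (c • ws k) := rfl
  rw [h2] at h1
  have h3 : c • p = (c • p.1, c * p.2) := rfl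
  rwa [h3] at h1

lemma mem_sum_sets {m : ℕ} (S : Fin m → Set E) (g : Fin m → E)
    (h : ∀ i, g i ∈ S i) : (∑ i, g i) ∈ ∑ i, S i := by
  classical
  induction (Finset.univ : Finset (Fin m)) using Finset.induction with
  | empty => simp
  | insert _ _ hnot ih =>
    rw [Finset.sum_insert hnot, Finset.sum_insert hnot]
    exact Set.add_mem_add (h _) ih


set_option maxHeartbeats 2000000 in
lemma key [FiniteDimensional ℝ E] {m : ℕ} (hm : 0 < m) (f : Fin m → E → EReal)
    (hlsc : ∀ i, LowerSemicontinuous (f i)) (hbot : ∀ i x, f i x ≠ ⊥)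
    (hQC : ∀ u : Fin m → E,
      (∀ i, u i ∈ singSubInfty (f i)) → (∑ i, u i) = 0 → ∀ i, u i = 0)
    {w : E} {s : ℝ} (hws : (w, s) ∈ NclAtInfty (fun x => ⨆ i, f i x)) :
    ∃ μ : Fin m → E × ℝ, (∀ i, (μ i).2 ≤ 0) ∧ (∑ i, μ i) = (w, s) ∧
      ∀ i, μ i ∈ NclAtInfty (f i) := by
  classical
  obtain ⟨xs, ws, htop, hnorm, hmem, hlim⟩ := hws
  have hΩg : epiSet (fun x => ⨆ i, f i x) = ⋂ i, epiSet (f i) := by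
    ext p
    simp only [epiSet, Set.mem_setOf_eq, Set.mem_iInter]
    exact iSup_le_iff
  -- Stage 2: diagonalize the limiting normal cone
  have hdiag : ∀ k : ℕ, ∃ Q V : WithLp 2 (E × ℝ),
      V ∈ FrechetNormalCone (epiSet (fun x => ⨆ i, f i x)) Q ∧
      ‖Q - mkP (xs k) ((⨆ i, f i (xs k)).toReal)‖ < 1/((k:ℝ)+1) ∧
      ‖V - ws k‖ < 1/((k:ℝ)+1) := by
    intro k
    obtain ⟨ys, vs, hfre, hy, hv⟩ := hmem k
    have hpos : (0:ℝ) < 1/((k:ℝ)+1) := by positivity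
    have h1 := Metric.tendsto_nhds.mp hy _ hpos
    have h2 := Metric.tendsto_nhds.mp hv _ hpos
    obtain ⟨j, hj1, hj2⟩ := (h1.and h2).exists
    rw [dist_eq_norm] at hj1 hj2
    exact ⟨ys j, vs j, hfre j, hj1, hj2⟩
  choose Q V hfreQV hQP hVw using hdiag
  have hone : Tendsto (fun k : ℕ => 1/((k:ℝ)+1)) atTop (𝓝 0) :=
    tendsto_one_div_add_atTop_nhds_zero_nat
  have honele : ∀ k : ℕ, 1/((k:ℝ)+1) ≤ 1 := by
    intro k
    rw [div_le_one (by positivity)]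
    linarith [Nat.cast_nonneg (α := ℝ) k]
  -- first components go to infinity
  have hQfst : ∀ k, ‖xs k‖ - 1/((k:ℝ)+1) ≤ ‖(Q k).fst‖ := by
    intro k
    have h1 : ‖(Q k).fst - xs k‖ ≤ ‖Q k - mkP (xs k) ((⨆ i, f i (xs k)).toReal)‖ := by
      have h0 := norm_fst_le' (Q k - mkP (xs k) ((⨆ i, f i (xs k)).toReal))
      exact h0
    have h2 := abs_le.mp (abs_norm_sub_norm_le ((Q k).fst) (xs k))
    have h3 := (hQP k).le
    linarith [h2.1]
  have hQat : Tendsto (fun k => ‖(Q k).fst‖) atTop atTop := by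
    apply tendsto_atTop_mono (fun k => ?_) (tendsto_atTop_add_const_right _ (-1) hnorm)
    linarith [hQfst k, honele k]
  -- V tends to mkP w s
  have hwsX : Tendsto ws atTop (𝓝 (mkP w s)) := by
    have hc : Continuous ((WithLp.prodContinuousLinearEquiv 2 ℝ E ℝ).symm : E × ℝ → WithLp 2 (E × ℝ)) :=
      (WithLp.prodContinuousLinearEquiv 2 ℝ E ℝ).symm.continuous
    have h1 := (hc.tendsto (w, s)).comp hlim
    exact h1
  have hVtend : Tendsto V atTop (𝓝 (mkP w s)) := by
    have hdiff : Tendsto (fun k => V k - ws k) atTop (𝓝 0) :=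
      squeeze_zero_norm (fun k => (hVw k).le) hone
    have h1 := hwsX.add hdiff
    simpa using h1
  -- Stage 3: fuzzy intersection rule at each k
  have hfz : ∀ k : ℕ, ∃ y μ : Fin m → WithLp 2 (E × ℝ),
      (∀ i, ‖y i - Q k‖ ≤ 1/((k:ℝ)+1)) ∧
      (∀ i, μ i ∈ FrechetNormalCone (epiSet (f i)) (y i)) ∧
      ‖(∑ i, μ i) - V k‖ ≤ 1/((k:ℝ)+1) := by
    intro k
    have hv := hfreQV k
    rw [hΩg] at hv
    exact fuzzy hm _ (fun i => epiSet_closed (hlsc i)) hv (by positivity)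
  choose Yb μb hYQ hμfre hμnear using hfz
  -- Stage 4: move base points to the graph
  have hepi : ∀ k i, Yb k i ∈ epiSet (f i) := fun k i => (hμfre k i).1
  have htopa : ∀ k i, f i ((Yb k i).fst) ≠ ⊤ := by
    intro k i
    have h1 := hepi k i
    rw [mem_epiSet] at h1
    exact ne_top_of_le_ne_top (EReal.coe_ne_top _) h1
  have hgr : ∀ k i, μb k i ∈ FrechetNormalCone (epiSet (f i))
      (mkP ((Yb k i).fst) ((f i ((Yb k i).fst)).toReal)) := by
    intro k i
    apply frechet_epi_move_down (htopa k i) (hbot i _)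
    have h1 := hμfre k i
    rwa [← mkP_eta (Yb k i)] at h1
  have hsnd : ∀ k i, (μb k i).snd ≤ 0 := fun k i => frechet_epi_snd_nonpos (hμfre k i)
  have haat : ∀ i, Tendsto (fun k => ‖(Yb k i).fst‖) atTop atTop := by
    intro i
    apply tendsto_atTop_mono (fun k => ?_) (tendsto_atTop_add_const_right _ (-1) hQat)
    have h1 : ‖(Yb k i).fst - (Q k).fst‖ ≤ ‖Yb k i - Q k‖ := by
      have h0 := norm_fst_le' (Yb k i - Q k)
      exact h0
    have h2 := abs_le.mp (abs_norm_sub_norm_le ((Yb k i).fst) ((Q k).fst))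
    have h4 := hYQ k i
    linarith [h2.1, honele k]
  have hSumTend : Tendsto (fun k => ∑ i, μb k i) atTop (𝓝 (mkP w s)) := by
    have hdiff : Tendsto (fun k => (∑ i, μb k i) - V k) atTop (𝓝 0) :=
      squeeze_zero_norm (fun k => hμnear k) hone
    have h1 := hVtend.add hdiff
    simpa using h1
  -- Stage 5: dichotomy on the total norm
  set St : ℕ → ℝ := fun k => ∑ i, ‖μb k i‖ with hStdef
  have hμleSt : ∀ k i, ‖μb k i‖ ≤ St k := fun k i =>
    Finset.single_le_sum (f := fun i => ‖μb k i‖) (fun i _ => norm_nonneg _)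
      (Finset.mem_univ i)
  have hStnn : ∀ k, 0 ≤ St k := fun k => Finset.sum_nonneg fun i _ => norm_nonneg _
  have hsndcont : Continuous (fun p : WithLp 2 (E × ℝ) => p.snd) :=
    continuous_snd.comp (WithLp.prodContinuousLinearEquiv 2 ℝ E ℝ).continuous
  by_cases hbdd : ∃ C : ℝ, {k | St k ≤ C}.Infinite
  · -- bounded case: extract convergent multipliers
    obtain ⟨C, hC⟩ := hbdd
    have hψex : ∀ j : ℕ, ∃ k, j ≤ k ∧ St k ≤ C := by
      intro j
      obtain ⟨k, hk1, hk2⟩ := hC.exists_gt j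
      exact ⟨k, hk2.le, hk1⟩
    choose ψ hψ1 hψ2 using hψex
    have hψat : Tendsto ψ atTop atTop := tendsto_atTop_mono hψ1 tendsto_id
    have hTupmem : ∀ j, (fun i => μb (ψ j) i) ∈
        Metric.closedBall (0 : Fin m → WithLp 2 (E × ℝ)) (max C 0) := by
      intro j
      rw [Metric.mem_closedBall, dist_zero_right]
      apply pi_norm_le_iff_of_nonneg (le_max_right _ _) |>.mpr
      intro i
      exact le_trans (le_trans (hμleSt (ψ j) i) (hψ2 j)) (le_max_left _ _)
    obtain ⟨μl, _, φ2, hφ2, hμltend⟩ :=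
      (isCompact_closedBall (0 : Fin m → WithLp 2 (E × ℝ)) (max C 0)).tendsto_subseq hTupmem
    have hκat : Tendsto (fun j => ψ (φ2 j)) atTop atTop := hψat.comp hφ2.tendsto_atTop
    have hμlim : ∀ i, Tendsto (fun j => μb (ψ (φ2 j)) i) atTop (𝓝 (μl i)) := fun i =>
      ((continuous_apply i).tendsto μl).comp hμltend
    have hsum : ∑ i, μl i = mkP w s := by
      have h1 : Tendsto (fun j => ∑ i, μb (ψ (φ2 j)) i) atTop (𝓝 (∑ i, μl i)) :=
        tendsto_finset_sum _ (fun i _ => hμlim i)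
      exact tendsto_nhds_unique h1 (hSumTend.comp hκat)
    have hsndl : ∀ i, (μl i).snd ≤ 0 := by
      intro i
      have h1 : Tendsto (fun j => (μb (ψ (φ2 j)) i).snd) atTop (𝓝 ((μl i).snd)) :=
        (hsndcont.tendsto _).comp (hμlim i)
      exact le_of_tendsto h1 (Eventually.of_forall fun j => hsnd _ i)
    refine ⟨fun i => WithLp.prodContinuousLinearEquiv 2 ℝ E ℝ (μl i),
      fun i => hsndl i, ?_, ?_⟩
    · have h1 := congrArg (WithLp.prodContinuousLinearEquiv 2 ℝ E ℝ) hsum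
      rw [map_sum] at h1
      exact h1
    · intro i
      refine ⟨fun j => (Yb (ψ (φ2 j)) i).fst, fun j => μb (ψ (φ2 j)) i,
        fun j => htopa _ i, (haat i).comp hκat,
        fun j => frechet_mem_limiting (hgr _ i), ?_⟩
      exact ((WithLp.prodContinuousLinearEquiv 2 ℝ E ℝ).continuous.tendsto _).comp (hμlim i)
  · -- unbounded case: contradiction with the qualification condition
    exfalso
    push_neg at hbdd
    have hStat : Tendsto St atTop atTop := by
      rw [← Nat.cofinite_eq_atTop]
      rw [tendsto_atTop]
      intro C
      rw [eventually_cofinite]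
      apply Set.Finite.subset (hbdd C)
      intro k hk
      simp only [Set.mem_setOf_eq, not_le] at hk
      exact hk.le
    obtain ⟨N, hN⟩ := (hStat.eventually_ge_atTop 1).exists_forall_of_atTop
    have hStpos : ∀ j : ℕ, (0:ℝ) < St (N + j) := fun j =>
      lt_of_lt_of_le one_pos (hN _ (Nat.le_add_right N j))
    have hNat : Tendsto (fun j : ℕ => N + j) atTop atTop := by
      simpa [Nat.add_comm] using tendsto_add_atTop_nat N
    have hTupmem : ∀ j, (fun i => (St (N + j))⁻¹ • μb (N + j) i) ∈
        Metric.closedBall (0 : Fin m → WithLp 2 (E × ℝ)) 1 := by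
      intro j
      rw [Metric.mem_closedBall, dist_zero_right]
      apply pi_norm_le_iff_of_nonneg zero_le_one |>.mpr
      intro i
      rw [norm_smul, Real.norm_eq_abs, abs_of_pos (inv_pos.mpr (hStpos j))]
      rw [inv_mul_le_iff₀ (hStpos j), mul_one]
      exact hμleSt (N + j) i
    obtain ⟨νl, _, φ2, hφ2, hνltend⟩ :=
      (isCompact_closedBall (0 : Fin m → WithLp 2 (E × ℝ)) 1).tendsto_subseq hTupmem
    have hκat : Tendsto (fun j => N + φ2 j) atTop atTop := hNat.comp hφ2.tendsto_atTop
    have hνlim : ∀ i, Tendsto (fun j => (St (N + φ2 j))⁻¹ • μb (N + φ2 j) i) atTop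
        (𝓝 (νl i)) := fun i => ((continuous_apply i).tendsto νl).comp hνltend
    have hStinv : Tendsto (fun j => (St (N + φ2 j))⁻¹) atTop (𝓝 0) :=
      tendsto_inv_atTop_zero.comp (hStat.comp hκat)
    -- sum of limits is zero
    have hsum0 : ∑ i, νl i = 0 := by
      have h1 : Tendsto (fun j => ∑ i, (St (N + φ2 j))⁻¹ • μb (N + φ2 j) i) atTop
          (𝓝 (∑ i, νl i)) := tendsto_finset_sum _ (fun i _ => hνlim i)
      have h2 : (fun j => ∑ i, (St (N + φ2 j))⁻¹ • μb (N + φ2 j) i)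
          = fun j => (St (N + φ2 j))⁻¹ • (∑ i, μb (N + φ2 j) i) := by
        funext j
        rw [Finset.smul_sum]
      rw [h2] at h1
      have h3 : Tendsto (fun j => (St (N + φ2 j))⁻¹ • (∑ i, μb (N + φ2 j) i)) atTop
          (𝓝 ((0:ℝ) • (mkP w s))) := hStinv.smul (hSumTend.comp hκat)
      rw [zero_smul] at h3
      exact tendsto_nhds_unique h1 h3
    -- sum of norms of limits is one
    have hnorm1 : ∑ i, ‖νl i‖ = 1 := by
      have h1 : Tendsto (fun j => ∑ i, ‖(St (N + φ2 j))⁻¹ • μb (N + φ2 j) i‖) atTop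
          (𝓝 (∑ i, ‖νl i‖)) :=
        tendsto_finset_sum _ (fun i _ => (hνlim i).norm)
      have h2 : ∀ j, ∑ i, ‖(St (N + φ2 j))⁻¹ • μb (N + φ2 j) i‖ = 1 := by
        intro j
        have h3 : ∀ i, ‖(St (N + φ2 j))⁻¹ • μb (N + φ2 j) i‖
            = (St (N + φ2 j))⁻¹ * ‖μb (N + φ2 j) i‖ := by
          intro i
          rw [norm_smul, Real.norm_eq_abs, abs_of_pos (inv_pos.mpr (hStpos (φ2 j)))]
        rw [Finset.sum_congr rfl (fun i _ => h3 i), ← Finset.mul_sum]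
        exact inv_mul_cancel₀ (ne_of_gt (hStpos (φ2 j)))
      rw [funext h2] at h1
      exact (tendsto_nhds_unique tendsto_const_nhds h1).symm
    -- second components vanish
    have hsndν : ∀ i, (νl i).snd ≤ 0 := by
      intro i
      have h1 : Tendsto (fun j => ((St (N + φ2 j))⁻¹ • μb (N + φ2 j) i).snd) atTop
          (𝓝 ((νl i).snd)) := (hsndcont.tendsto _).comp (hνlim i)
      refine le_of_tendsto h1 (Eventually.of_forall fun j => ?_)
      have h2 : ((St (N + φ2 j))⁻¹ • μb (N + φ2 j) i).snd
          = (St (N + φ2 j))⁻¹ * (μb (N + φ2 j) i).snd := rfl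
      rw [h2]
      exact mul_nonpos_of_nonneg_of_nonpos (inv_pos.mpr (hStpos (φ2 j))).le (hsnd _ i)
    have hsndsum : ∑ i, (νl i).snd = 0 := by
      have h2 := map_sum (WithLp.prodContinuousLinearEquiv 2 ℝ E ℝ) νl Finset.univ
      have h1 : (∑ i, νl i).snd = ∑ i, (νl i).snd := by
        calc (∑ i, νl i).snd
            = ((WithLp.prodContinuousLinearEquiv 2 ℝ E ℝ) (∑ i, νl i)).2 := rfl
          _ = (∑ i, (WithLp.prodContinuousLinearEquiv 2 ℝ E ℝ) (νl i)).2 := by rw [h2]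
          _ = ∑ i, ((WithLp.prodContinuousLinearEquiv 2 ℝ E ℝ) (νl i)).2 := Prod.snd_sum
          _ = ∑ i, (νl i).snd := rfl
      rw [← h1, hsum0]
      rfl
    have hsndzero : ∀ i, (νl i).snd = 0 := by
      have := (Finset.sum_eq_zero_iff_of_nonpos
        (fun i _ => hsndν i)).mp hsndsum
      exact fun i => this i (Finset.mem_univ i)
    -- apply the qualification condition
    have hu : ∀ i, (νl i).fst ∈ singSubInfty (f i) := by
      intro i
      refine ⟨fun j => (Yb (N + φ2 j) i).fst, fun j => (St (N + φ2 j))⁻¹ • μb (N + φ2 j) i,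
        fun j => htopa _ i, (haat i).comp hκat,
        fun j => frechet_mem_limiting (frechet_smul (inv_pos.mpr (hStpos (φ2 j))) (hgr _ i)), ?_⟩
      have h1 := ((WithLp.prodContinuousLinearEquiv 2 ℝ E ℝ).continuous.tendsto _).comp (hνlim i)
      have h2 : (WithLp.prodContinuousLinearEquiv 2 ℝ E ℝ) (νl i) = ((νl i).fst, (0:ℝ)) := by
        have h3 : (WithLp.prodContinuousLinearEquiv 2 ℝ E ℝ) (νl i) = ((νl i).fst, (νl i).snd) := rfl
        rw [h3, hsndzero i]
      rwa [h2] at h1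
    have hfstsum : ∑ i, (νl i).fst = 0 := by
      have h2 := map_sum (WithLp.prodContinuousLinearEquiv 2 ℝ E ℝ) νl Finset.univ
      have h1 : (∑ i, νl i).fst = ∑ i, (νl i).fst := by
        calc (∑ i, νl i).fst
            = ((WithLp.prodContinuousLinearEquiv 2 ℝ E ℝ) (∑ i, νl i)).1 := rfl
          _ = (∑ i, (WithLp.prodContinuousLinearEquiv 2 ℝ E ℝ) (νl i)).1 := by rw [h2]
          _ = ∑ i, ((WithLp.prodContinuousLinearEquiv 2 ℝ E ℝ) (νl i)).1 := Prod.fst_sum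
          _ = ∑ i, (νl i).fst := rfl
      rw [← h1, hsum0]
      rfl
    have hall0 := hQC (fun i => (νl i).fst) hu hfstsum
    have hν0 : ∀ i, νl i = 0 := by
      intro i
      have h1 : (WithLp.prodContinuousLinearEquiv 2 ℝ E ℝ) (νl i) = ((νl i).fst, (νl i).snd) := rfl
      have h2 : (WithLp.prodContinuousLinearEquiv 2 ℝ E ℝ) (νl i) = (0 : E × ℝ) := by
        have h4 : (νl i).fst = 0 := hall0 i
        rw [h1, h4, hsndzero i]
        rfl
      have := (WithLp.prodContinuousLinearEquiv 2 ℝ E ℝ).injective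
        (h2.trans (map_zero _).symm)
      exact this
    rw [Finset.sum_congr rfl (fun i _ => by rw [hν0 i, norm_zero])] at hnorm1
    simp at hnorm1

end


/-- Proposition 2.14: maximum rule for the limiting and singular
subdifferentials at infinity. -/
theorem max_rule_at_infinity {n m : ℕ} (hm : 2 ≤ m)
    (f : Fin m → EuclideanSpace ℝ (Fin n) → EReal)
    (hlsc : ∀ i, LowerSemicontinuous (f i)) (hbot : ∀ i x, f i x ≠ ⊥)
    (hdom : ∀ i, ¬ Bornology.IsBounded {x | f i x ≠ ⊤})
    (hdommax : ¬ Bornology.IsBounded {x | (⨆ i, f i x) ≠ ⊤})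
    (hQC : ∀ u : Fin m → EuclideanSpace ℝ (Fin n),
      (∀ i, u i ∈ singSubInfty (f i)) → (∑ i, u i) = 0 → ∀ i, u i = 0) :
    subInfty (fun x => ⨆ i, f i x) ⊆
      {w | ∃ lam : Fin m → ℝ, (∀ i, 0 ≤ lam i) ∧ (∑ i, lam i) = 1 ∧
        w ∈ ∑ i, lamCirc (f i) (lam i)} ∧
    singSubInfty (fun x => ⨆ i, f i x) ⊆ ∑ i, singSubInfty (f i) := by
  have hm0 : 0 < m := by omega
  constructor
  · intro w hw
    obtain ⟨μ, hμsnd, hμsum, hμmem⟩ := key hm0 f hlsc hbot hQC hw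
    have hfst : ∑ i, (μ i).1 = w := by
      have := congrArg Prod.fst hμsum
      simpa [Prod.fst_sum] using this
    have hsnd : ∑ i, (μ i).2 = -1 := by
      have := congrArg Prod.snd hμsum
      simpa [Prod.snd_sum] using this
    refine ⟨fun i => -(μ i).2, fun i => by simpa using neg_nonneg.mpr (hμsnd i), by
      simp only
      rw [Finset.sum_neg_distrib, hsnd]; ring, ?_⟩
    rw [← hfst]
    apply mem_sum_sets
    intro i
    by_cases h0 : (μ i).2 = 0
    · have : -(μ i).2 = 0 := by rw [h0]; ring
      rw [lamCirc, if_pos this]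
      have h1 := hμmem i
      have h2 : ((μ i).1, (0:ℝ)) = μ i := by
        rw [← h0]
      rw [singSubInfty, Set.mem_setOf_eq, h2]
      exact h1
    · have hpos : 0 < -(μ i).2 := lt_of_le_of_ne (by linarith [hμsnd i]) (by
        intro h; exact h0 (by linarith [h]))
      rw [lamCirc, if_neg (ne_of_gt hpos)]
      have hcinv : 0 < (-(μ i).2)⁻¹ := inv_pos.mpr hpos
      have h1 := ncl_smul hcinv (hμmem i)
      have h2 : (-(μ i).2)⁻¹ * (μ i).2 = -1 := by
        field_simp
      rw [h2] at h1
      refine Set.mem_smul_set.mpr ⟨(-(μ i).2)⁻¹ • (μ i).1, h1, ?_⟩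
      rw [smul_smul]
      rw [mul_inv_cancel₀ (ne_of_gt hpos), one_smul]
  · intro w hw
    obtain ⟨μ, hμsnd, hμsum, hμmem⟩ := key hm0 f hlsc hbot hQC hw
    have hfst : ∑ i, (μ i).1 = w := by
      have := congrArg Prod.fst hμsum
      simpa [Prod.fst_sum] using this
    have hsnd : ∑ i, (μ i).2 = 0 := by
      have := congrArg Prod.snd hμsum
      simpa [Prod.snd_sum] using this
    have hzero : ∀ i, (μ i).2 = 0 := by
      have := (Finset.sum_eq_zero_iff_of_nonpos (fun i _ => hμsnd i)).mp hsnd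
      exact fun i => this i (Finset.mem_univ i)
    rw [← hfst]
    apply mem_sum_sets
    intro i
    have h2 : ((μ i).1, (0:ℝ)) = μ i := by rw [← hzero i]
    rw [singSubInfty, Set.mem_setOf_eq, h2]
    exact hμmem i
end

section
/- Let f: ℝ → ℝ be given by f(x) = e^x + 1/(|x| + 1). Then the singular subdifferential of f at infinity is ∂^∞f(∞) = [0, +∞). Moreover, f is bounded from below on ℝ₋ = (−∞, 0] but does not attain its infimum on ℝ₋. -/
open Filter Topology Set Pointwise RealInnerProductSpace

-- monotone
lemma mono_aux (f : ℝ → ℝ) (hf : ∀ x, f x = Real.exp x + 1 / (|x| + 1)) : Monotone f := by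
  have key : ∀ x y : ℝ, x ≤ y → f x ≤ f y := by
    intro x y hxy
    rw [hf x, hf y]
    rcases le_total y 0 with hy | hy
    · have hx : x ≤ 0 := hxy.trans hy
      rw [abs_of_nonpos hx, abs_of_nonpos hy]
      have h1 : Real.exp x ≤ Real.exp y := Real.exp_le_exp.mpr hxy
      have h2 : 1 / (-x + 1) ≤ 1 / (-y + 1) := by
        apply one_div_le_one_div_of_le <;> linarith
      linarith
    · rcases le_total 0 x with hx | hx
      · rw [abs_of_nonneg hx, abs_of_nonneg hy]
        have h1 : 1/(x+1) - 1/(y+1) = (y-x)/((x+1)*(y+1)) := by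
          field_simp
          ring
        have h2 : (y-x)/((x+1)*(y+1)) ≤ y - x := by
          apply div_le_self (by linarith) (by nlinarith)
        have h3 : y - x ≤ Real.exp y - Real.exp x := by
          have e1 : Real.exp y = Real.exp x * Real.exp (y - x) := by
            rw [← Real.exp_add]; ring_nf
          have e2 : y - x + 1 ≤ Real.exp (y - x) := Real.add_one_le_exp _
          have e3 : (1:ℝ) ≤ Real.exp x := Real.one_le_exp hx
          nlinarith
        linarith
      · calc Real.exp x + 1/(|x|+1) ≤ Real.exp 0 + 1/(|(0:ℝ)|+1) := by
              rw [abs_of_nonpos hx]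
              have h1 : Real.exp x ≤ Real.exp 0 := Real.exp_le_exp.mpr hx
              have h2 : 1 / (-x + 1) ≤ 1 / 1 := by
                apply one_div_le_one_div_of_le <;> linarith
              simp only [abs_zero]
              linarith
          _ ≤ Real.exp y + 1/(|y|+1) := by
              rw [abs_of_nonneg hy]
              have h1 : Real.exp 0 ≤ Real.exp y := Real.exp_le_exp.mpr hy
              have h2 : 1/(0+1) - 1/(y+1) ≤ Real.exp y - Real.exp 0 := by
                have h3 : (1:ℝ)/(0+1) - 1/(y+1) = y/(y+1) := by
                  field_simp
                  ring
                have h4 : y/(y+1) ≤ y := div_le_self hy (by linarith)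
                have h5 : y + 1 ≤ Real.exp y := Real.add_one_le_exp y
                rw [h3, Real.exp_zero]
                linarith
              simp only [abs_zero]
              linarith
  exact key

lemma pos_aux (f : ℝ → ℝ) (hf : ∀ x, f x = Real.exp x + 1 / (|x| + 1)) : ∀ x, 0 < f x := by
  intro x; rw [hf x]
  have := Real.exp_pos x
  have h2 : (0:ℝ) < 1 / (|x| + 1) := by positivity
  linarith

lemma abs_fst_le_norm (z : WithLp 2 (ℝ × ℝ)) : |z.fst| ≤ ‖z‖ := by
  rw [WithLp.prod_norm_eq_of_L2]
  simp only [Real.norm_eq_abs, sq_abs]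
  rw [← Real.sqrt_sq_eq_abs]
  apply Real.sqrt_le_sqrt; nlinarith [sq_nonneg z.snd]

lemma frechet_fst_nonneg {f : ℝ → ℝ} (hm : Monotone f) {p v : WithLp 2 (ℝ × ℝ)}
    (hv : v ∈ FrechetNormalCone (epiSet fun x : ℝ => ((f x : ℝ) : EReal)) p) :
    0 ≤ v.fst := by
  obtain ⟨hp, h⟩ := hv
  have hpeq : (WithLp.equiv 2 (ℝ × ℝ)).symm (p.fst, p.snd) = p := by
    apply (WithLp.equiv 2 (ℝ × ℝ)).injective
    exact Prod.ext (by simp [WithLp.equiv_apply, WithLp.ofLp_fst]) (by simp [WithLp.ofLp_snd])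
  have hfp : f p.fst ≤ p.snd := by
    have := hp
    simp only [epiSet, mem_setOf_eq, WithLp.equiv_apply, WithLp.ofLp_fst, WithLp.ofLp_snd] at this
    exact_mod_cast this
  set y : ℕ → WithLp 2 (ℝ × ℝ) :=
    fun n => (WithLp.equiv 2 (ℝ × ℝ)).symm (p.fst - 1/(n+1), p.snd) with hy
  have hymem : ∀ n, y n ∈ epiSet (fun x : ℝ => ((f x : ℝ) : EReal)) := by
    intro n
    simp only [epiSet, mem_setOf_eq, hy, Equiv.apply_symm_apply]
    have h0 : p.fst - 1/((n:ℝ)+1) ≤ p.fst := by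
      have : (0:ℝ) < 1/((n:ℝ)+1) := by positivity
      linarith
    have : f (p.fst - 1/(n+1)) ≤ p.snd := le_trans (hm h0) hfp
    exact_mod_cast this
  have hytend : Tendsto y atTop (𝓝[epiSet (fun x : ℝ => ((f x : ℝ) : EReal))] p) := by
    rw [tendsto_nhdsWithin_iff]
    constructor
    · have hc : Continuous fun q : ℝ × ℝ => (WithLp.equiv 2 (ℝ×ℝ)).symm q :=
        (WithLp.prodContinuousLinearEquiv 2 ℝ ℝ ℝ).symm.continuous
      have h1 : Tendsto (fun n : ℕ => (p.fst - 1/((n:ℝ)+1), p.snd)) atTop (𝓝 (p.fst, p.snd)) := by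
        apply Tendsto.prodMk_nhds _ tendsto_const_nhds
        have := tendsto_one_div_add_atTop_nhds_zero_nat (𝕜 := ℝ)
        have h2 : Tendsto (fun n : ℕ => p.fst - 1/((n:ℝ)+1)) atTop (𝓝 (p.fst - 0)) :=
          tendsto_const_nhds.sub this
        simpa using h2
      have := (hc.tendsto (p.fst, p.snd)).comp h1
      rwa [hpeq] at this
    · exact Eventually.of_forall hymem
  have key : ∀ ε > (0:ℝ), -v.fst ≤ ε := by
    intro ε hε
    have hev := hytend.eventually (h ε hε)
    obtain ⟨n, hn⟩ := hev.exists
    have hsub : y n - p = (WithLp.equiv 2 (ℝ×ℝ)).symm (-(1/((n:ℝ)+1)), 0) := by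
      conv_lhs => rw [← hpeq, hy]
      simp only [WithLp.equiv_symm_apply, ← WithLp.toLp_sub, Prod.mk_sub_mk]
      ring_nf
    have hnorm : ‖y n - p‖ = 1/((n:ℝ)+1) := by
      rw [hsub, WithLp.equiv_symm_apply, WithLp.norm_toLp_fst]
      simp
      positivity
    have hinner : ⟪v, y n - p⟫ = v.fst * (-(1/((n:ℝ)+1))) := by
      rw [WithLp.prod_inner_apply, hsub]
      simp [RCLike.inner_apply, WithLp.toLp_fst, WithLp.toLp_snd]
      ring
    rw [hinner, hnorm] at hn
    have hd : (0:ℝ) < 1/((n:ℝ)+1) := by positivity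
    nlinarith
  by_contra hneg
  push_neg at hneg
  have := key (-v.fst/2) (by linarith)
  linarith

lemma limiting_fst_nonneg {f : ℝ → ℝ} (hm : Monotone f) {p v : WithLp 2 (ℝ × ℝ)}
    (hv : v ∈ LimitingNormalCone (epiSet fun x : ℝ => ((f x : ℝ) : EReal)) p) :
    0 ≤ v.fst := by
  obtain ⟨xs, vs, hmem, _, hvt⟩ := hv
  have hc : Continuous fun q : WithLp 2 (ℝ×ℝ) => q.fst :=
    continuous_fst.comp (WithLp.prodContinuousLinearEquiv 2 ℝ ℝ ℝ).continuous
  have : Tendsto (fun k => (vs k).fst) atTop (𝓝 v.fst) := (hc.tendsto v).comp hvt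
  exact ge_of_tendsto this (Eventually.of_forall fun k => frechet_fst_nonneg hm (hmem k))

lemma mem_frechet_of_deriv {f : ℝ → ℝ} {x c lam : ℝ} (hlam : 0 ≤ lam)
    (hd : HasDerivAt f c x) :
    (WithLp.equiv 2 (ℝ×ℝ)).symm (lam * c, -lam) ∈
      FrechetNormalCone (epiSet fun x : ℝ => ((f x : ℝ) : EReal))
        ((WithLp.equiv 2 (ℝ×ℝ)).symm (x, f x)) := by
  constructor
  · simp [epiSet, mem_setOf_eq, Equiv.apply_symm_apply]
  · intro ε hε
    set p := (WithLp.equiv 2 (ℝ×ℝ)).symm (x, f x) with hp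
    have hε' : (0:ℝ) < ε/(lam+1) := by positivity
    have hlo := (hasDerivAt_iff_isLittleO.mp hd).def hε'
    simp only [Real.norm_eq_abs, smul_eq_mul] at hlo
    -- hlo : ∀ᶠ y1 in 𝓝 x, |f y1 - f x - (y1 - x) * c| ≤ ε/(lam+1) * |y1 - x|
    have hc : Continuous fun q : WithLp 2 (ℝ×ℝ) => q.fst :=
      continuous_fst.comp (WithLp.prodContinuousLinearEquiv 2 ℝ ℝ ℝ).continuous
    have hp1 : p.fst = x := by simp [hp, WithLp.toLp_fst]
    have hev : ∀ᶠ q in 𝓝 p, |f q.fst - f x - (q.fst - x) * c| ≤ ε/(lam+1) * |q.fst - x| := by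
      exact (hc.tendsto p).eventually hlo
    have hev2 := eventually_nhdsWithin_of_eventually_nhds
      (s := epiSet fun x : ℝ => ((f x : ℝ) : EReal)) hev
    filter_upwards [hev2, eventually_mem_nhdsWithin] with q hq hqmem
    have hq2 : f q.fst ≤ q.snd := by
      simp only [epiSet, mem_setOf_eq, WithLp.equiv_apply, WithLp.ofLp_fst, WithLp.ofLp_snd] at hqmem
      exact_mod_cast hqmem
    have hsub1 : (q - p).fst = q.fst - x := by rw [WithLp.sub_fst, hp1]
    have hsub2 : (q - p).snd = q.snd - f x := by
      rw [WithLp.sub_snd]; simp [hp, WithLp.toLp_snd]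
    have hinner : ⟪(WithLp.equiv 2 (ℝ×ℝ)).symm (lam * c, -lam), q - p⟫ =
        lam * c * (q.fst - x) + (-lam) * (q.snd - f x) := by
      rw [WithLp.prod_inner_apply]
      simp [RCLike.inner_apply, WithLp.toLp_fst, WithLp.toLp_snd, hsub1, hsub2]
      simp only [hp1, hp, WithLp.equiv_symm_apply, WithLp.toLp_fst, WithLp.toLp_snd]
      ring
    rw [hinner]
    have habs : |(q-p).fst| ≤ ‖q - p‖ := abs_fst_le_norm _
    rw [hsub1] at habs
    have step1 : lam * c * (q.fst - x) + (-lam) * (q.snd - f x)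
        ≤ lam * (c * (q.fst - x) - (f q.fst - f x)) := by nlinarith
    have step2 : lam * (c * (q.fst - x) - (f q.fst - f x)) ≤ lam * (ε/(lam+1) * |q.fst - x|) := by
      have h1 : c * (q.fst - x) - (f q.fst - f x) ≤ |f q.fst - f x - (q.fst - x) * c| := by
        have h := neg_le_abs (f q.fst - f x - (q.fst - x) * c)
        nlinarith
      have := h1.trans hq
      exact mul_le_mul_of_nonneg_left this hlam
    have step3 : lam * (ε/(lam+1) * |q.fst - x|) ≤ ε * ‖q - p‖ := by
      have h1 : lam * (ε/(lam+1)) ≤ ε := by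
        rw [mul_div_assoc']
        rw [div_le_iff₀ (by linarith)]
        nlinarith
      calc lam * (ε/(lam+1) * |q.fst - x|) = (lam * (ε/(lam+1))) * |q.fst - x| := by ring
      _ ≤ ε * |q.fst - x| := by
          apply mul_le_mul_of_nonneg_right h1 (abs_nonneg _)
      _ ≤ ε * ‖q - p‖ := mul_le_mul_of_nonneg_left habs hε.le
    linarith

lemma frechet_subset_limiting {Ω : Set (WithLp 2 (ℝ×ℝ))} {p v : WithLp 2 (ℝ×ℝ)}
    (h : v ∈ FrechetNormalCone Ω p) : v ∈ LimitingNormalCone Ω p :=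
  ⟨fun _ => p, fun _ => v, fun _ => h, tendsto_const_nhds, tendsto_const_nhds⟩

lemma deriv_f_pos {f : ℝ → ℝ} (hf : ∀ x, f x = Real.exp x + 1 / (|x| + 1)) {x : ℝ}
    (hx : 0 < x) : HasDerivAt f (Real.exp x + (-1 / (x+1)^2)) x := by
  have hg : HasDerivAt (fun t : ℝ => Real.exp t + (t+1)⁻¹)
      (Real.exp x + (-1 / (x+1)^2)) x := by
    have h1 := Real.hasDerivAt_exp x
    have h2 : HasDerivAt (fun t : ℝ => t + 1) 1 x := (hasDerivAt_id x).add_const 1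
    have h3 := h2.inv (by positivity : x + 1 ≠ 0)
    exact h1.add h3
  apply hg.congr_of_eventuallyEq
  filter_upwards [eventually_gt_nhds hx] with t ht
  rw [hf t, abs_of_pos ht, one_div]

lemma supset_lemma {f : ℝ → ℝ} (hf : ∀ x, f x = Real.exp x + 1 / (|x| + 1)) {u : ℝ}
    (hu : 0 ≤ u) : u ∈ singSubInfty (fun x : ℝ => ((f x : ℝ) : EReal)) := by
  set c : ℕ → ℝ := fun k => Real.exp ((k:ℝ)+1) + (-1 / (((k:ℝ)+1)+1)^2) with hc
  have hck : ∀ k, (1:ℝ) ≤ c k := by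
    intro k
    have h1 : (k:ℝ) + 1 + 1 ≤ Real.exp ((k:ℝ)+1) := Real.add_one_le_exp _
    have h2 : (1:ℝ) ≤ (((k:ℝ)+1)+1)^2 := by nlinarith [Nat.cast_nonneg (α := ℝ) k]
    have h3 : -1 / (((k:ℝ)+1)+1)^2 ≥ -1 := by
      rw [ge_iff_le, neg_div, neg_le_neg_iff]
      rw [div_le_one (by positivity)]
      exact h2
    have : (0:ℝ) ≤ (k:ℝ) := Nat.cast_nonneg k
    simp only [hc]
    linarith
  have hcpos : ∀ k, (0:ℝ) < c k := fun k => lt_of_lt_of_le one_pos (hck k)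
  have hctop : Tendsto c atTop atTop := by
    apply tendsto_atTop_mono (f := fun k : ℕ => Real.exp ((k:ℝ)+1) - 1)
    · intro k
      have h2 : (1:ℝ) ≤ (((k:ℝ)+1)+1)^2 := by nlinarith [Nat.cast_nonneg (α := ℝ) k]
      have h3 : -1 / (((k:ℝ)+1)+1)^2 ≥ -1 := by
        rw [ge_iff_le, neg_div, neg_le_neg_iff, div_le_one (by positivity)]
        exact h2
      simp only [hc]
      linarith
    · have h1 : Tendsto (fun k : ℕ => (k:ℝ)+1) atTop atTop :=
        tendsto_atTop_add_const_right _ 1 tendsto_natCast_atTop_atTop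
      have h2 := Real.tendsto_exp_atTop.comp h1
      simpa [sub_eq_add_neg] using tendsto_atTop_add_const_right _ (-1) h2
  refine ⟨fun k => (k:ℝ)+1, fun k => (WithLp.equiv 2 (ℝ×ℝ)).symm (u, -(u / c k)),
    fun k => EReal.coe_ne_top _, ?_, ?_, ?_⟩
  · have h1 : Tendsto (fun k : ℕ => (k:ℝ)+1) atTop atTop :=
      tendsto_atTop_add_const_right _ 1 tendsto_natCast_atTop_atTop
    have heq : (fun k : ℕ => ‖(k:ℝ)+1‖) = fun k : ℕ => (k:ℝ)+1 := by
      funext k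
      rw [Real.norm_eq_abs, abs_of_pos (by positivity)]
    rw [heq]; exact h1
  · intro k
    have hx : (0:ℝ) < (k:ℝ)+1 := by positivity
    have hd := deriv_f_pos hf hx
    have hlam : (0:ℝ) ≤ u / c k := div_nonneg hu (hcpos k).le
    have hmem := mem_frechet_of_deriv hlam hd
    have heq : u / c k * (Real.exp ((k:ℝ)+1) + (-1 / (((k:ℝ)+1)+1)^2)) = u := by
      rw [div_mul_cancel₀]
      exact (hcpos k).ne'
    rw [heq] at hmem
    have hpt : mkP ((k:ℝ)+1) (((fun x : ℝ => ((f x : ℝ) : EReal)) ((k:ℝ)+1)).toReal)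
        = (WithLp.equiv 2 (ℝ×ℝ)).symm ((k:ℝ)+1, f ((k:ℝ)+1)) := by
      simp [mkP]
    rw [hpt]
    exact frechet_subset_limiting hmem
  · simp only [Equiv.apply_symm_apply]
    apply Tendsto.prodMk_nhds tendsto_const_nhds
    have : Tendsto (fun k => u / c k) atTop (𝓝 0) := Tendsto.div_atTop tendsto_const_nhds hctop
    simpa using this.neg

/-- Example 4.7: for `f(x) = eˣ + 1/(|x|+1)` one has `∂^∞f(∞) = [0,∞)`;
moreover `f` is bounded below on `ℝ₋ = (-∞,0]` but does not attain its infimum there. -/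
theorem example_exp_singular_subInfty (f : ℝ → ℝ)
    (hf : ∀ x, f x = Real.exp x + 1 / (|x| + 1)) :
    singSubInfty (fun x : ℝ => ((f x : ℝ) : EReal)) = Set.Ici (0:ℝ) ∧
    BddBelow (f '' Set.Iic (0:ℝ)) ∧
    ∀ x ∈ Set.Iic (0:ℝ), sInf (f '' Set.Iic (0:ℝ)) < f x := by
  have hmono := mono_aux f hf
  have hpos := pos_aux f hf
  have hbdd : BddBelow (f '' Set.Iic (0:ℝ)) := by
    refine ⟨0, ?_⟩
    rintro y ⟨x, -, rfl⟩
    exact (hpos x).le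
  refine ⟨?_, hbdd, ?_⟩
  · ext u
    simp only [Set.mem_Ici]
    constructor
    · rintro ⟨xs, ws, hne, hxs, hmem, hconv⟩
      have hfst : Tendsto (fun k => (WithLp.equiv 2 (ℝ×ℝ) (ws k)).1) atTop (𝓝 u) :=
        (continuous_fst.tendsto _).comp hconv
      apply ge_of_tendsto hfst
      apply Eventually.of_forall
      intro k
      have := limiting_fst_nonneg hmono (hmem k)
      simpa [WithLp.equiv_apply, WithLp.ofLp_fst] using this
    · exact fun hu => supset_lemma hf hu
  · intro x hx
    have hinf : sInf (f '' Set.Iic (0:ℝ)) ≤ 0 := by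
      have hseq : Tendsto (fun n : ℕ => f (-(n:ℝ))) atTop (𝓝 0) := by
        have he : Tendsto (fun n : ℕ => Real.exp (-(n:ℝ))) atTop (𝓝 0) := by
          apply Real.tendsto_exp_atBot.comp
          exact tendsto_neg_atTop_atBot.comp tendsto_natCast_atTop_atTop
        have hd : Tendsto (fun n : ℕ => 1/((n:ℝ)+1)) atTop (𝓝 0) :=
          tendsto_one_div_add_atTop_nhds_zero_nat
        have heq : (fun n : ℕ => f (-(n:ℝ)))
            = fun n : ℕ => Real.exp (-(n:ℝ)) + 1/((n:ℝ)+1) := by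
          funext n
          rw [hf, abs_neg, abs_of_nonneg (Nat.cast_nonneg n)]
        rw [heq]
        simpa using he.add hd
      apply ge_of_tendsto hseq
      apply Eventually.of_forall
      intro n
      apply csInf_le hbdd
      exact ⟨-(n:ℝ), by simp [neg_nonpos], rfl⟩
    exact lt_of_le_of_lt hinf (hpos x)
end
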